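/- arXiv:0706.0498 — 9 statements merged into one kernel-verified Lean document; each statement's English description precedes it below -/
import Mathlib

section
/- Let η₁,…,ηₙ be independent Bernoulli random variables with success probabilities p₁ ≥ p₂ ≥ … ≥ pₙ, and let S = η₁ + ⋯ + ηₙ. Then for i < j, E[ηᵢ/(S ∨ 1)] ≥ E[ηⱼ/(S ∨ 1)], i.e. the sequence i ↦ E[ηᵢ/max(S,1)] is decreasing. -/
open MeasureTheory ProbabilityTheory

private lemma pointwise_key {x y t : ℝ} (hx : x = 0 ∨ x = 1) (hy : y = 0 ∨ y = 1)
    (ht : 0 ≤ t) :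
    x / max (x + y + t) 1 = x * y * (t + 2)⁻¹ + x * (1 - y) * (t + 1)⁻¹ := by
  rcases hx with hx | hx <;> rcases hy with hy | hy <;> subst hx <;> subst hy <;> simp
  · rw [max_eq_left (by linarith)]; ring
  · rw [max_eq_left (by linarith)]; ring

/-- Let η₁,…,ηₙ be independent Bernoulli random variables with success probabilities
p₁ ≥ ⋯ ≥ pₙ, and S = η₁ + ⋯ + ηₙ. Then for i < j, E[ηᵢ/(S ∨ 1)] ≥ E[ηⱼ/(S ∨ 1)]. -/
theorem stmt0 {Ω : Type*} [MeasureSpace Ω] [IsProbabilityMeasure (ℙ : Measure Ω)]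
    {n : ℕ} (η : Fin n → Ω → ℝ) (p : Fin n → ℝ)
    (hmeas : ∀ i, Measurable (η i))
    (hval : ∀ i ω, η i ω = 0 ∨ η i ω = 1)
    (hind : iIndepFun η ℙ)
    (hp : ∀ i, (ℙ {ω | η i ω = 1}).toReal = p i)
    (hmono : Antitone p)
    {i j : Fin n} (hij : i < j) :
    ∫ ω, η j ω / max (∑ k, η k ω) 1 ≤ ∫ ω, η i ω / max (∑ k, η k ω) 1 := by
  have hij' : i ≠ j := hij.ne
  set s : Finset (Fin n) := {i, j} with hs
  set T : Ω → ℝ := fun ω => ∑ k ∈ Finset.univ \ s, η k ω with hTdef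
  have hTmeas : Measurable T := Finset.measurable_sum _ (fun k _ => hmeas k)
  have hTnonneg : ∀ ω, 0 ≤ T ω := fun ω =>
    Finset.sum_nonneg fun k _ => by rcases hval k ω with h | h <;> simp [h]
  have hsum : ∀ ω, ∑ k, η k ω = η i ω + η j ω + T ω := by
    intro ω
    rw [hTdef]
    rw [← Finset.sum_sdiff (Finset.subset_univ s), hs, Finset.sum_pair hij']
    ring
  -- bounds on η
  have hbd : ∀ k ω, |η k ω| ≤ 1 := by
    intro k ω; rcases hval k ω with h | h <;> simp [h]
  -- the two auxiliary functions of T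
  set g1 : Ω → ℝ := fun ω => (T ω + 1)⁻¹ with hg1def
  set g2 : Ω → ℝ := fun ω => (T ω + 2)⁻¹ with hg2def
  have hg1meas : Measurable g1 := (hTmeas.add_const 1).inv
  have hg2meas : Measurable g2 := (hTmeas.add_const 2).inv
  have hg1bd : ∀ ω, |g1 ω| ≤ 1 := by
    intro ω
    rw [abs_of_nonneg (inv_nonneg.mpr (by linarith [hTnonneg ω]))]
    rw [inv_le_one_iff₀]; right; linarith [hTnonneg ω]
  have hg2bd : ∀ ω, |g2 ω| ≤ 1 := by
    intro ω
    rw [abs_of_nonneg (inv_nonneg.mpr (by linarith [hTnonneg ω]))]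
    rw [inv_le_one_iff₀]; right; linarith [hTnonneg ω]
  -- independence of (η i, η j) and T
  have hmem_i : i ∈ s := by simp [hs]
  have hmem_j : j ∈ s := by simp [hs]
  have hPQ : IndepFun (fun a => (η i a, η j a)) T ℙ := by
    have h := hind.indepFun_finset s (Finset.univ \ s) Finset.disjoint_sdiff hmeas
    have h2 := h.comp (φ := fun v : s → ℝ => (v ⟨i, hmem_i⟩, v ⟨j, hmem_j⟩))
      (ψ := fun v : (Finset.univ \ s : Finset (Fin n)) → ℝ => ∑ k, v k)
      (show Measurable (fun v : s → ℝ => (v ⟨i, hmem_i⟩, v ⟨j, hmem_j⟩)) from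
        (measurable_pi_apply (⟨i, hmem_i⟩ : s)).prodMk (measurable_pi_apply (⟨j, hmem_j⟩ : s)))
      (Finset.measurable_sum _ fun k _ => measurable_pi_apply k)
    have heq : ((fun v : (Finset.univ \ s : Finset (Fin n)) → ℝ => ∑ k, v k) ∘
        (fun a (k : (Finset.univ \ s : Finset (Fin n))) => η k a)) = T := by
      funext a
      simp only [Function.comp_apply, hTdef]
      exact Finset.sum_coe_sort (Finset.univ \ s) (fun k => η k a)
    rwa [heq] at h2
  -- independence consequences
  have hXijmeas : Measurable (fun ω => η i ω * η j ω) := (hmeas i).mul (hmeas j)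
  have hXi : IndepFun (fun ω => η i ω * (1 - η j ω)) g1 ℙ := by
    have := hPQ.comp (φ := fun q : ℝ × ℝ => q.1 * (1 - q.2)) (ψ := fun t : ℝ => (t + 1)⁻¹)
      (measurable_fst.mul (measurable_const.sub measurable_snd))
      ((measurable_id.add_const 1).inv)
    exact this
  have hXj : IndepFun (fun ω => η j ω * (1 - η i ω)) g1 ℙ := by
    have := hPQ.comp (φ := fun q : ℝ × ℝ => q.2 * (1 - q.1)) (ψ := fun t : ℝ => (t + 1)⁻¹)
      (measurable_snd.mul (measurable_const.sub measurable_fst))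
      ((measurable_id.add_const 1).inv)
    exact this
  have hX2 : IndepFun (fun ω => η i ω * η j ω) g2 ℙ := by
    have := hPQ.comp (φ := fun q : ℝ × ℝ => q.1 * q.2) (ψ := fun t : ℝ => (t + 2)⁻¹)
      (measurable_fst.mul measurable_snd)
      ((measurable_id.add_const 2).inv)
    exact this
  -- integrability helpers
  have hintegrable : ∀ (f : Ω → ℝ), Measurable f → (∀ ω, |f ω| ≤ 1) → Integrable f ℙ := by
    intro f hf hb
    exact (integrable_const (1 : ℝ)).mono' hf.aestronglyMeasurable (Filter.Eventually.of_forall hb)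
  have habs_mul : ∀ (a b : ℝ), |a| ≤ 1 → |b| ≤ 1 → |a * b| ≤ 1 := by
    intro a b ha hb
    rw [abs_mul]
    calc |a| * |b| ≤ 1 * 1 := mul_le_mul ha hb (abs_nonneg b) zero_le_one
    _ = 1 := mul_one 1
  have hbd1j : ∀ ω, |1 - η j ω| ≤ 1 := by
    intro ω; rcases hval j ω with h | h <;> simp [h]
  have hbd1i : ∀ ω, |1 - η i ω| ≤ 1 := by
    intro ω; rcases hval i ω with h | h <;> simp [h]
  have hInt_ij : Integrable (fun ω => η i ω * η j ω) ℙ :=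
    hintegrable _ hXijmeas fun ω => habs_mul _ _ (hbd i ω) (hbd j ω)
  have hInt_i : Integrable (η i) ℙ := hintegrable _ (hmeas i) (hbd i)
  have hInt_j : Integrable (η j) ℙ := hintegrable _ (hmeas j) (hbd j)
  have hInt_X2g2 : Integrable (fun ω => η i ω * η j ω * g2 ω) ℙ :=
    hintegrable _ (hXijmeas.mul hg2meas)
      fun ω => habs_mul _ _ (habs_mul _ _ (hbd i ω) (hbd j ω)) (hg2bd ω)
  have hInt_Xig1 : Integrable (fun ω => η i ω * (1 - η j ω) * g1 ω) ℙ :=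
    hintegrable _ (((hmeas i).mul (measurable_const.sub (hmeas j))).mul hg1meas)
      fun ω => habs_mul _ _ (habs_mul _ _ (hbd i ω) (hbd1j ω)) (hg1bd ω)
  have hInt_Xjg1 : Integrable (fun ω => η j ω * (1 - η i ω) * g1 ω) ℙ :=
    hintegrable _ (((hmeas j).mul (measurable_const.sub (hmeas i))).mul hg1meas)
      fun ω => habs_mul _ _ (habs_mul _ _ (hbd j ω) (hbd1i ω)) (hg1bd ω)
  -- rewrite the integrands
  have hrw_i : (fun ω => η i ω / max (∑ k, η k ω) 1)
      = fun ω => η i ω * η j ω * g2 ω + η i ω * (1 - η j ω) * g1 ω := by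
    funext ω
    rw [hsum ω]
    exact pointwise_key (hval i ω) (hval j ω) (hTnonneg ω)
  have hrw_j : (fun ω => η j ω / max (∑ k, η k ω) 1)
      = fun ω => η i ω * η j ω * g2 ω + η j ω * (1 - η i ω) * g1 ω := by
    funext ω
    rw [hsum ω]
    have := pointwise_key (hval j ω) (hval i ω) (hTnonneg ω)
    rw [show η i ω + η j ω + T ω = η j ω + η i ω + T ω by ring, this]
    ring
  -- expectation of η k is p k
  have hEη : ∀ k, ∫ ω, η k ω = p k := by
    intro k
    have hset : MeasurableSet {ω | η k ω = 1} := (hmeas k) (measurableSet_singleton 1)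
    have hind' : (fun ω => η k ω) = Set.indicator {ω | η k ω = 1} (fun _ => (1 : ℝ)) := by
      funext ω
      rcases hval k ω with h | h <;> simp [Set.indicator, h]
    rw [hind', integral_indicator_const _ hset, ← hp k]
    simp [measureReal_def]
  -- compute both integrals
  have hcomp_i : ∫ ω, η i ω / max (∑ k, η k ω) 1
      = (∫ ω, η i ω * η j ω) * (∫ ω, g2 ω) + (∫ ω, η i ω * (1 - η j ω)) * (∫ ω, g1 ω) := by
    rw [hrw_i, integral_add hInt_X2g2 hInt_Xig1]
    have e1 := hX2.integral_mul_eq_mul_integral hXijmeas.aestronglyMeasurable hg2meas.aestronglyMeasurable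
    have e2 := hXi.integral_mul_eq_mul_integral
      (((hmeas i).mul (measurable_const.sub (hmeas j))).aestronglyMeasurable)
      hg1meas.aestronglyMeasurable
    exact congrArg₂ (· + ·) e1 e2
  have hcomp_j : ∫ ω, η j ω / max (∑ k, η k ω) 1
      = (∫ ω, η i ω * η j ω) * (∫ ω, g2 ω) + (∫ ω, η j ω * (1 - η i ω)) * (∫ ω, g1 ω) := by
    rw [hrw_j, integral_add hInt_X2g2 hInt_Xjg1]
    have e1 := hX2.integral_mul_eq_mul_integral hXijmeas.aestronglyMeasurable hg2meas.aestronglyMeasurable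
    have e2 := hXj.integral_mul_eq_mul_integral
      (((hmeas j).mul (measurable_const.sub (hmeas i))).aestronglyMeasurable)
      hg1meas.aestronglyMeasurable
    exact congrArg₂ (· + ·) e1 e2
  have hEi : ∫ ω, η i ω * (1 - η j ω) = p i - ∫ ω, η i ω * η j ω := by
    have : (fun ω => η i ω * (1 - η j ω)) = fun ω => η i ω - η i ω * η j ω := by
      funext ω; ring
    rw [this, integral_sub hInt_i hInt_ij, hEη i]
  have hEj : ∫ ω, η j ω * (1 - η i ω) = p j - ∫ ω, η i ω * η j ω := by
    have : (fun ω => η j ω * (1 - η i ω)) = fun ω => η j ω - η i ω * η j ω := by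
      funext ω; ring
    rw [this, integral_sub hInt_j hInt_ij, hEη j]
  have hg1nonneg : 0 ≤ ∫ ω, g1 ω := integral_nonneg fun ω => inv_nonneg.mpr (by linarith [hTnonneg ω])
  rw [hcomp_i, hcomp_j, hEi, hEj]
  have hpij : p j ≤ p i := hmono hij.le
  nlinarith [hg1nonneg, hpij]
end

section
/- For ε > 0, K ≥ 1, ν₁,…,ν_K > 0 and 0 < u ≤ min_k ν_k, ∫_{Γ_u(ν)} x_k^ε dx = (V_ε/(K+ε)) · (ν̄/ν_k) · (u/ν̄)^{K/ε + 1} for each k = 1,…,K, where Γ_u(ν) = {x ∈ [0,1]^K : Σ_j ν_j x_j^ε ≤ u}, ν̄ = (ν₁⋯ν_K)^{1/K}, and V_ε = Leb{x ∈ [0,1]^K : Σ x_j^ε ≤ 1}. -/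
open MeasureTheory Set

namespace Stmt4Aux

variable {K : ℕ} {ε : ℝ}

/-- The weighted region Γ_u(ν). -/
def Gam (K : ℕ) (ε : ℝ) (ν : Fin K → ℝ) (u : ℝ) : Set (Fin K → ℝ) :=
  {x | (∀ j, x j ∈ Set.Icc (0:ℝ) 1) ∧ ∑ j, ν j * x j ^ ε ≤ u}

lemma continuous_wsum (hε : 0 < ε) (ν : Fin K → ℝ) :
    Continuous (fun x : Fin K → ℝ => ∑ j, ν j * x j ^ ε) := by
  exact continuous_finset_sum _ fun j _ =>
    continuous_const.mul ((Real.continuous_rpow_const hε.le).comp (continuous_apply j))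

lemma isClosed_Gam (hε : 0 < ε) (ν : Fin K → ℝ) (u : ℝ) : IsClosed (Gam K ε ν u) := by
  have h1 : IsClosed {x : Fin K → ℝ | ∀ j, x j ∈ Set.Icc (0:ℝ) 1} := by
    have : {x : Fin K → ℝ | ∀ j, x j ∈ Set.Icc (0:ℝ) 1}
        = ⋂ j, (fun x : Fin K → ℝ => x j) ⁻¹' Set.Icc (0:ℝ) 1 := by
      ext x; simp
    rw [this]
    exact isClosed_iInter fun j => isClosed_Icc.preimage (continuous_apply j)
  exact h1.inter (isClosed_le (continuous_wsum hε ν) continuous_const)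

lemma measurableSet_Gam (hε : 0 < ε) (ν : Fin K → ℝ) (u : ℝ) :
    MeasurableSet (Gam K ε ν u) := (isClosed_Gam hε ν u).measurableSet

lemma isCompact_Gam (hε : 0 < ε) (ν : Fin K → ℝ) (u : ℝ) : IsCompact (Gam K ε ν u) := by
  refine IsCompact.of_isClosed_subset (isCompact_Icc (a := (0 : Fin K → ℝ)) (b := 1))
    (isClosed_Gam hε ν u) ?_
  intro x hx
  constructor
  · intro j; exact (hx.1 j).1
  · intro j; exact (hx.1 j).2

lemma volume_Gam_lt_top (hε : 0 < ε) (ν : Fin K → ℝ) (u : ℝ) :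
    volume (Gam K ε ν u) < ⊤ := (isCompact_Gam hε ν u).measure_lt_top

/-- Change of variables along the diagonal linear map. -/
lemma cov (c : Fin K → ℝ) (hc : ∀ j, 0 < c j) {A : Set (Fin K → ℝ)} (hA : MeasurableSet A)
    (g : (Fin K → ℝ) → ℝ) :
    ∫ x in (fun y (j : Fin K) => c j * y j) '' A, g x
      = (∏ j, c j) * ∫ y in A, g (fun j => c j * y j) := by
  classical
  set L : (Fin K → ℝ) →L[ℝ] (Fin K → ℝ) :=
    LinearMap.toContinuousLinearMap (Matrix.toLin' (Matrix.diagonal c)) with hL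
  have hLapp : ∀ y : Fin K → ℝ, L y = fun j => c j * y j := by
    intro y; funext j
    simp [hL, Matrix.toLin'_apply, Matrix.mulVec_diagonal]
  have hfun : (fun y (j : Fin K) => c j * y j) = ⇑L := by
    funext y; rw [hLapp]
  have hdet : L.det = ∏ j, c j := by
    have : (L : (Fin K → ℝ) →ₗ[ℝ] (Fin K → ℝ)) = Matrix.toLin' (Matrix.diagonal c) := by
      simp [hL]
    rw [ContinuousLinearMap.det, this, LinearMap.det_toLin', Matrix.det_diagonal]
  have hinj : Function.Injective (fun (y : Fin K → ℝ) (j : Fin K) => c j * y j) := by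
    intro y z h
    funext j
    exact mul_left_cancel₀ (hc j).ne' (congrFun h j)
  rw [hfun]
  rw [MeasureTheory.integral_image_eq_integral_abs_det_fderiv_smul volume hA
      (fun x _ => (L.hasFDerivAt).hasFDerivWithinAt) (hfun ▸ hinj).injOn g]
  simp only [hdet, smul_eq_mul, abs_of_pos (Finset.prod_pos (fun j _ => hc j))]
  rw [MeasureTheory.integral_const_mul]
  congr 1
  refine setIntegral_congr_fun hA fun y _ => ?_
  rw [hLapp]

lemma rpow_le_one_of_le_one {y : ℝ} (hε : 0 < ε) (hy : 0 ≤ y) (h : y ^ ε ≤ 1) : y ≤ 1 := by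
  by_contra hlt
  push_neg at hlt
  have h1 : (1:ℝ) ^ ε < y ^ ε := Real.rpow_lt_rpow (by norm_num) hlt hε
  rw [Real.one_rpow] at h1
  linarith

lemma image_Gam (hε : 0 < ε) (ν : Fin K → ℝ) (hν : ∀ j, 0 < ν j) (u : ℝ) (hu : 0 < u)
    (humin : ∀ j, u ≤ ν j) :
    (fun (y : Fin K → ℝ) (j : Fin K) => (u / ν j) ^ ((1:ℝ)/ε) * y j) ''
        (Gam K ε (fun _ => 1) 1) = Gam K ε ν u := by
  have hcpos : ∀ j, 0 < (u / ν j) ^ ((1:ℝ)/ε) :=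
    fun j => Real.rpow_pos_of_pos (div_pos hu (hν j)) _
  have hcle : ∀ j, (u / ν j) ^ ((1:ℝ)/ε) ≤ 1 := fun j =>
    Real.rpow_le_one (div_nonneg hu.le (hν j).le)
      ((div_le_one (hν j)).mpr (humin j)) (by positivity)
  have hcpow : ∀ j, ((u / ν j) ^ ((1:ℝ)/ε)) ^ ε = u / ν j := by
    intro j
    rw [← Real.rpow_mul (div_nonneg hu.le (hν j).le), one_div,
      inv_mul_cancel₀ hε.ne', Real.rpow_one]
  ext x
  constructor
  · rintro ⟨y, ⟨hy1, hy2⟩, rfl⟩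
    constructor
    · intro j
      exact ⟨mul_nonneg (hcpos j).le (hy1 j).1,
        mul_le_one₀ (hcle j) (hy1 j).1 (hy1 j).2⟩
    · have : ∀ j, ν j * ((u / ν j) ^ ((1:ℝ)/ε) * y j) ^ ε = u * (y j ^ ε) := by
        intro j
        rw [Real.mul_rpow (hcpos j).le (hy1 j).1, hcpow j, ← mul_assoc,
          mul_comm (ν j), div_mul_cancel₀ u (hν j).ne']
      simp only [this]
      rw [← Finset.mul_sum]
      calc u * ∑ j, y j ^ ε ≤ u * 1 := by
            apply mul_le_mul_of_nonneg_left _ hu.le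
            simpa using hy2
        _ = u := mul_one u
  · rintro ⟨hx1, hx2⟩
    have hterm : ∀ j, (x j / (u / ν j) ^ ((1:ℝ)/ε)) ^ ε = ν j * x j ^ ε / u := by
      intro j
      rw [Real.div_rpow (hx1 j).1 (hcpos j).le, hcpow j, div_div_eq_mul_div, mul_comm]
    have key : ∑ j, (x j / (u / ν j) ^ ((1:ℝ)/ε)) ^ ε ≤ 1 := by
      simp only [hterm]
      rw [← Finset.sum_div, div_le_one hu]
      exact hx2
    refine ⟨fun j => x j / (u / ν j) ^ ((1:ℝ)/ε),
      ⟨fun j => ⟨div_nonneg (hx1 j).1 (hcpos j).le, ?_⟩, by simpa using key⟩, ?_⟩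
    · refine rpow_le_one_of_le_one hε (div_nonneg (hx1 j).1 (hcpos j).le) ?_
      refine le_trans ?_ key
      exact Finset.single_le_sum
        (fun i _ => Real.rpow_nonneg (div_nonneg (hx1 i).1 (hcpos i).le) ε)
        (Finset.mem_univ j)
    · funext j
      show (u / ν j) ^ ((1:ℝ)/ε) * (x j / (u / ν j) ^ ((1:ℝ)/ε)) = x j
      rw [mul_comm, div_mul_cancel₀ _ (hcpos j).ne']

/-- Change of variables specialized to the regions. -/
lemma setIntegral_Gam (hε : 0 < ε) (ν : Fin K → ℝ) (hν : ∀ j, 0 < ν j) (u : ℝ) (hu : 0 < u)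
    (humin : ∀ j, u ≤ ν j) (g : (Fin K → ℝ) → ℝ) :
    ∫ x in Gam K ε ν u, g x
      = (∏ j, (u / ν j) ^ ((1:ℝ)/ε)) *
          ∫ y in Gam K ε (fun _ => 1) 1, g (fun j => (u / ν j) ^ ((1:ℝ)/ε) * y j) := by
  rw [← image_Gam hε ν hν u hu humin]
  exact cov _ (fun j => Real.rpow_pos_of_pos (div_pos hu (hν j)) _)
    (measurableSet_Gam hε _ _) g

lemma vol_scale (hε : 0 < ε) {t : ℝ} (ht : 0 < t) (ht1 : t ≤ 1) :
    (volume (Gam K ε (fun _ => 1) t)).toReal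
      = t ^ ((K:ℝ)/ε) * (volume (Gam K ε (fun _ => 1) 1)).toReal := by
  have h := setIntegral_Gam (K := K) hε (fun _ => (1:ℝ)) (fun _ => one_pos) t ht (fun _ => ht1)
    (fun _ => (1:ℝ))
  rw [setIntegral_const, setIntegral_const] at h
  simp only [smul_eq_mul, mul_one] at h
  simp only [measureReal_def] at h
  rw [h, Finset.prod_const, Finset.card_univ, Fintype.card_fin]
  congr 1
  rw [div_one, ← Real.rpow_natCast (t ^ ((1:ℝ)/ε)) K, ← Real.rpow_mul ht.le]
  congr 1
  ring

lemma integral_coord_symm (hε : 0 < ε) (k j : Fin K) :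
    ∫ y in Gam K ε (fun _ => 1) 1, y k ^ ε = ∫ y in Gam K ε (fun _ => 1) 1, y j ^ ε := by
  classical
  set e : (Fin K → ℝ) ≃ᵐ (Fin K → ℝ) :=
    MeasurableEquiv.arrowCongr' (Equiv.swap k j) (MeasurableEquiv.refl ℝ) with he
  have happ : ∀ (x : Fin K → ℝ) (i : Fin K), e x i = x (Equiv.swap k j i) := by
    intro x i
    simp [he, MeasurableEquiv.arrowCongr', Equiv.arrowCongr', Equiv.arrowCongr,
      Equiv.symm_symm, Equiv.symm_swap]
  have hmp : MeasurePreserving e volume volume :=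
    volume_preserving_arrowCongr' _ (MeasurableEquiv.refl ℝ) (MeasurePreserving.id _)
  have hpre : e ⁻¹' (Gam K ε (fun _ => 1) 1) = Gam K ε (fun _ => 1) 1 := by
    ext x
    simp only [mem_preimage, Gam, Set.mem_setOf_eq, happ, one_mul]
    constructor
    · rintro ⟨h1, h2⟩
      refine ⟨fun i => ?_, ?_⟩
      · have := h1 (Equiv.swap k j i)
        rwa [Equiv.swap_apply_self] at this
      · rw [← Equiv.sum_comp (Equiv.swap k j) (fun i => x i ^ ε)]
        exact h2
    · rintro ⟨h1, h2⟩
      refine ⟨fun i => h1 _, ?_⟩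
      rw [Equiv.sum_comp (Equiv.swap k j) (fun i => x i ^ ε)]
      exact h2
  have := hmp.setIntegral_preimage_emb e.measurableEmbedding
    (fun y => y k ^ ε) (Gam K ε (fun _ => 1) 1)
  rw [hpre] at this
  rw [← this]
  apply setIntegral_congr_fun (measurableSet_Gam hε _ _)
  intro x _
  simp only [happ, Equiv.swap_apply_left]

lemma integral_sum_rpow (hε : 0 < ε) :
    ∫ y in Gam K ε (fun _ => 1) 1, (∑ j, y j ^ ε)
      = (K/((K:ℝ)+ε)) * (volume (Gam K ε (fun _ => 1) 1)).toReal := by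
  classical
  set Δ : Set (Fin K → ℝ) := Gam K ε (fun _ => 1) 1 with hΔ
  set V : ℝ := (volume Δ).toReal with hV
  have hΔm : MeasurableSet Δ := measurableSet_Gam hε _ _
  have hΔtop : volume Δ ≠ ⊤ := (volume_Gam_lt_top hε _ _).ne
  set f : (Fin K → ℝ) → ℝ := fun y => ∑ j, y j ^ ε with hf
  have hfc : Continuous f := continuous_finset_sum _ fun j _ =>
    (Real.continuous_rpow_const hε.le).comp (continuous_apply j)
  have hfle : ∀ a ∈ Δ, f a ≤ 1 := by
    intro a ha
    have := ha.2
    simpa using this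
  have hint : IntegrableOn f Δ :=
    hfc.continuousOn.integrableOn_compact (isCompact_Gam hε _ _)
  have hnn : 0 ≤ᵐ[volume.restrict Δ] f :=
    (ae_restrict_iff' hΔm).mpr (ae_of_all _ fun x hx =>
      Finset.sum_nonneg fun i _ => Real.rpow_nonneg (hx.1 i).1 _)
  have lc := hint.integral_eq_integral_meas_lt hnn
  set h : ℝ → ℝ := fun t => ((volume.restrict Δ) {a | t < f a}).toReal with hh
  have hmlt : ∀ t : ℝ, MeasurableSet {a : Fin K → ℝ | t < f a} :=
    fun t => measurableSet_lt measurable_const hfc.measurable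
  have hrestr : ∀ t, (volume.restrict Δ) {a | t < f a} = volume ({a | t < f a} ∩ Δ) :=
    fun t => Measure.restrict_apply (hmlt t)
  have h2 : ∀ t ∈ Ioi (1:ℝ), h t = 0 := by
    intro t ht
    have : {a : Fin K → ℝ | t < f a} ∩ Δ = ∅ := by
      ext a
      simp only [mem_inter_iff, mem_setOf_eq, mem_empty_iff_false, iff_false, not_and]
      intro hta haΔ
      exact absurd hta (not_lt.mpr ((hfle a haΔ).trans ht.le))
    simp [hh, hrestr, this]
  have h1 : ∀ t ∈ Ioc (0:ℝ) 1, h t = V - t ^ ((K:ℝ)/ε) * V := by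
    intro t ht
    have hsub : Gam K ε (fun _ => 1) t ⊆ Δ := by
      intro a ha
      exact ⟨ha.1, ha.2.trans ht.2⟩
    have hseteq : {a : Fin K → ℝ | t < f a} ∩ Δ = Δ \ Gam K ε (fun _ => 1) t := by
      ext a
      simp only [mem_inter_iff, mem_setOf_eq, mem_diff, Gam, one_mul, hΔ, hf]
      constructor
      · rintro ⟨hta, h1, h2⟩
        exact ⟨⟨h1, h2⟩, fun hc => absurd hc.2 (not_le.mpr hta)⟩
      · rintro ⟨⟨h1, h2⟩, hc⟩
        refine ⟨?_, h1, h2⟩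
        by_contra hle
        exact hc ⟨h1, not_lt.mp hle⟩
    have hdiff : volume (Δ \ Gam K ε (fun _ => 1) t)
        = volume Δ - volume (Gam K ε (fun _ => 1) t) :=
      measure_diff hsub (measurableSet_Gam hε _ _).nullMeasurableSet
        (volume_Gam_lt_top hε _ _).ne
    rw [hh]
    simp only [hrestr, hseteq, hdiff]
    rw [ENNReal.toReal_sub_of_le (measure_mono hsub) hΔtop, vol_scale hε ht.1 ht.2]
  have hsplit : Ioi (0:ℝ) = Ioc 0 1 ∪ Ioi 1 := (Ioc_union_Ioi_eq_Ioi zero_le_one).symm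
  have hdisj : Disjoint (Ioc (0:ℝ) 1) (Ioi 1) :=
    disjoint_left.mpr fun t ht ht' => absurd ht.2 (not_le.mpr ht')
  have hg0c : Continuous (fun t : ℝ => V - t ^ ((K:ℝ)/ε) * V) :=
    continuous_const.sub ((Real.continuous_rpow_const (by positivity)).mul continuous_const)
  have hint1 : IntegrableOn h (Ioc (0:ℝ) 1) :=
    (integrableOn_congr_fun h1 measurableSet_Ioc).mpr (hg0c.integrableOn_Ioc)
  have hint2 : IntegrableOn h (Ioi (1:ℝ)) :=
    (integrableOn_congr_fun h2 measurableSet_Ioi).mpr (integrableOn_zero)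
  have heval : ∫ t in Ioi (0:ℝ), h t = ∫ t in Ioc (0:ℝ) 1, h t := by
    rw [hsplit, setIntegral_union hdisj measurableSet_Ioi hint1 hint2]
    have : ∫ t in Ioi (1:ℝ), h t = 0 := by
      rw [setIntegral_congr_fun measurableSet_Ioi h2]
      simp
    rw [this, add_zero]
  have heval2 : ∫ t in Ioc (0:ℝ) 1, h t = (K/((K:ℝ)+ε)) * V := by
    rw [setIntegral_congr_fun measurableSet_Ioc h1]
    rw [← intervalIntegral.integral_of_le zero_le_one]
    have hirp : IntervalIntegrable (fun t : ℝ => t ^ ((K:ℝ)/ε)) volume 0 1 :=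
      intervalIntegral.intervalIntegrable_rpow'
        (lt_of_lt_of_le (by norm_num) (by positivity : (0:ℝ) ≤ (K:ℝ)/ε))
    rw [intervalIntegral.integral_sub intervalIntegrable_const (hirp.mul_const V)]
    rw [intervalIntegral.integral_mul_const,
      integral_rpow (Or.inl (lt_of_lt_of_le (by norm_num) (by positivity : (0:ℝ) ≤ (K:ℝ)/ε)))]
    have hKε : (K:ℝ)/ε + 1 ≠ 0 := by
      have : (0:ℝ) ≤ (K:ℝ)/ε := by positivity
      intro hc; rw [← hc] at this; linarith
    rw [Real.one_rpow, Real.zero_rpow hKε]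
    simp only [intervalIntegral.integral_const, smul_eq_mul, mul_one, sub_zero]
    have hεne : ε ≠ 0 := hε.ne'
    have hKεne : (K:ℝ) + ε ≠ 0 := by positivity
    field_simp
    ring
  calc ∫ y in Δ, f y = ∫ t in Ioi (0:ℝ), h t := lc
    _ = (K/((K:ℝ)+ε)) * V := by rw [heval, heval2]

lemma integral_coord (hK : 1 ≤ K) (hε : 0 < ε) (k : Fin K) :
    ∫ y in Gam K ε (fun _ => 1) 1, y k ^ ε
      = (volume (Gam K ε (fun _ => 1) 1)).toReal / ((K:ℝ)+ε) := by
  classical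
  have hKpos : (0:ℝ) < (K:ℝ) := by exact_mod_cast hK
  have hintj : ∀ j : Fin K, IntegrableOn (fun y : Fin K → ℝ => y j ^ ε)
      (Gam K ε (fun _ => 1) 1) := fun j =>
    (((Real.continuous_rpow_const hε.le).comp
      (continuous_apply j)).continuousOn).integrableOn_compact (isCompact_Gam hε _ _)
  have hsum : ∫ y in Gam K ε (fun _ => 1) 1, (∑ j, y j ^ ε)
      = ∑ j : Fin K, ∫ y in Gam K ε (fun _ => 1) 1, y j ^ ε :=
    integral_finset_sum Finset.univ (fun j _ => hintj j)
  have hconst : ∀ j : Fin K, ∫ y in Gam K ε (fun _ => 1) 1, y j ^ ε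
      = ∫ y in Gam K ε (fun _ => 1) 1, y k ^ ε :=
    fun j => integral_coord_symm hε j k
  rw [integral_sum_rpow hε] at hsum
  simp only [hconst, Finset.sum_const, Finset.card_univ, Fintype.card_fin,
    nsmul_eq_mul] at hsum
  have h2 : (K:ℝ) * (∫ y in Gam K ε (fun _ => 1) 1, y k ^ ε)
      = (K:ℝ) * ((volume (Gam K ε (fun _ => 1) 1)).toReal / ((K:ℝ)+ε)) := by
    rw [← hsum]; ring
  exact mul_left_cancel₀ hKpos.ne' h2

end Stmt4Aux

open Stmt4Aux in
/-- For 0 < u ≤ min ν_k and each k,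
∫_{Γ_u(ν)} x_k^ε dx = (V_ε/(K+ε)) (ν̄/ν_k) (u/ν̄)^{K/ε+1}. -/
theorem stmt4 (K : ℕ) (hK : 1 ≤ K) (ε : ℝ) (hε : 0 < ε)
    (ν : Fin K → ℝ) (hν : ∀ k, 0 < ν k) (u : ℝ) (hu : 0 < u) (humin : ∀ k, u ≤ ν k)
    (k : Fin K) :
    (∫ x in {x : Fin K → ℝ | (∀ j, x j ∈ Set.Icc (0:ℝ) 1) ∧ ∑ j, ν j * x j ^ ε ≤ u},
        x k ^ ε)
      = (volume {x : Fin K → ℝ | (∀ j, x j ∈ Set.Icc (0:ℝ) 1) ∧ ∑ j, x j ^ ε ≤ 1}).toReal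
          / (K + ε) * ((∏ j, ν j) ^ ((1:ℝ)/K) / ν k)
          * (u / (∏ j, ν j) ^ ((1:ℝ)/K)) ^ ((K:ℝ)/ε + 1) := by
  classical
  have hset : {x : Fin K → ℝ | (∀ j, x j ∈ Set.Icc (0:ℝ) 1) ∧ ∑ j, x j ^ ε ≤ 1}
      = Gam K ε (fun _ => 1) 1 := by
    ext x; simp [Gam]
  rw [hset]
  show (∫ x in Gam K ε ν u, x k ^ ε) = _
  set V : ℝ := (volume (Gam K ε (fun _ => 1) 1)).toReal with hV
  have hcpos : ∀ j, 0 < (u / ν j) ^ ((1:ℝ)/ε) :=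
    fun j => Real.rpow_pos_of_pos (div_pos hu (hν j)) _
  have hcpow : ∀ j, ((u / ν j) ^ ((1:ℝ)/ε)) ^ ε = u / ν j := by
    intro j
    rw [← Real.rpow_mul (div_nonneg hu.le (hν j).le), one_div,
      inv_mul_cancel₀ hε.ne', Real.rpow_one]
  rw [setIntegral_Gam hε ν hν u hu humin (fun x => x k ^ ε)]
  have hinner : ∫ y in Gam K ε (fun _ => 1) 1,
      (fun x : Fin K → ℝ => x k ^ ε) (fun j => (u / ν j) ^ ((1:ℝ)/ε) * y j)
      = (u / ν k) * (V / ((K:ℝ) + ε)) := by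
    have hcong : ∀ y ∈ Gam K ε (fun _ => 1) 1,
        (fun x : Fin K → ℝ => x k ^ ε) (fun j => (u / ν j) ^ ((1:ℝ)/ε) * y j)
          = (u / ν k) * y k ^ ε := by
      intro y hy
      show ((u / ν k) ^ ((1:ℝ)/ε) * y k) ^ ε = (u / ν k) * y k ^ ε
      rw [Real.mul_rpow (hcpos k).le (hy.1 k).1, hcpow k]
    rw [setIntegral_congr_fun (measurableSet_Gam hε _ _) hcong,
      MeasureTheory.integral_const_mul, integral_coord hK hε k]
  rw [hinner]
  -- algebra
  have hKpos : (0:ℝ) < (K:ℝ) := by exact_mod_cast hK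
  have hP : (0:ℝ) < ∏ j, ν j := Finset.prod_pos (fun j _ => hν j)
  set νb : ℝ := (∏ j, ν j) ^ ((1:ℝ)/(K:ℝ)) with hνbdef
  have hνb : 0 < νb := Real.rpow_pos_of_pos hP _
  have hνbK : νb ^ ((K:ℝ)) = ∏ j, ν j := by
    rw [hνbdef, ← Real.rpow_mul hP.le, one_div, inv_mul_cancel₀ hKpos.ne', Real.rpow_one]
  have hprod : (∏ j, (u / ν j) ^ ((1:ℝ)/ε)) = (u / νb) ^ ((K:ℝ)/ε) := by
    rw [Real.finset_prod_rpow _ _ (fun j _ => div_nonneg hu.le (hν j).le),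
      Finset.prod_div_distrib, Finset.prod_const, Finset.card_univ, Fintype.card_fin]
    have h1 : (u / νb) ^ ((K:ℝ)/ε) = ((u / νb) ^ ((K:ℝ))) ^ ((1:ℝ)/ε) := by
      rw [← Real.rpow_mul (div_nonneg hu.le hνb.le)]
      congr 1
      field_simp
    rw [h1, Real.div_rpow hu.le hνb.le, hνbK, Real.rpow_natCast]
  rw [hprod]
  have hsplitpow : (u / νb) ^ ((K:ℝ)/ε + 1) = (u / νb) ^ ((K:ℝ)/ε) * (u / νb) := by
    rw [Real.rpow_add (div_pos hu hνb), Real.rpow_one]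
  rw [hsplitpow]
  have hKεne : (K:ℝ) + ε ≠ 0 := by positivity
  field_simp [hνb.ne', (hν k).ne', hKεne]
end

section
/- For ε > 0 and K ≥ 1, ∫_{[0,1]^K} (Σ_k z_k^ε) · 1{Σ_k z_k^ε ≤ 1} dz = V_ε · K/(K+ε), where V_ε = Leb{z ∈ [0,1]^K : Σ z_k^ε ≤ 1}. -/
open MeasureTheory Pointwise

/-- ∫_{[0,1]^K} (Σ z_k^ε) 1{Σ z_k^ε ≤ 1} dz = V_ε K/(K+ε). -/
theorem stmt5 (K : ℕ) (hK : 1 ≤ K) (ε : ℝ) (hε : 0 < ε) :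
    (∫ z in {z : Fin K → ℝ | (∀ k, z k ∈ Set.Icc (0:ℝ) 1) ∧ ∑ k, z k ^ ε ≤ 1},
        ∑ k, z k ^ ε)
      = (volume {z : Fin K → ℝ | (∀ k, z k ∈ Set.Icc (0:ℝ) 1) ∧ ∑ k, z k ^ ε ≤ 1}).toReal
          * K / (K + ε) := by
  set f : (Fin K → ℝ) → ℝ := fun z => ∑ k, z k ^ ε with hf
  set S : ℝ → Set (Fin K → ℝ) :=
    fun t => {z | (∀ k, z k ∈ Set.Icc (0:ℝ) 1) ∧ ∑ k, z k ^ ε ≤ t} with hSdef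
  set A : ℝ → Set (Fin K → ℝ) :=
    fun t => {z | (∀ k, 0 ≤ z k) ∧ ∑ k, z k ^ ε ≤ t} with hAdef
  have hcont1 : Continuous fun x : ℝ => x ^ ε :=
    continuous_iff_continuousAt.mpr fun x => Real.continuousAt_rpow_const x ε (Or.inr hε.le)
  have hcont : Continuous f :=
    continuous_finset_sum _ fun k _ => hcont1.comp (continuous_apply k)
  have hclosed : ∀ t, IsClosed (S t) := by
    intro t
    have h1 : IsClosed {z : Fin K → ℝ | ∀ k, z k ∈ Set.Icc (0:ℝ) 1} := by
      rw [Set.setOf_forall]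
      exact isClosed_iInter fun k => isClosed_Icc.preimage (continuous_apply k)
    exact h1.inter (isClosed_Iic.preimage hcont)
  have hmeas : ∀ t, MeasurableSet (S t) := fun t => (hclosed t).measurableSet
  have hcompact : IsCompact (S 1) := by
    refine (isCompact_Icc (a := (0 : Fin K → ℝ)) (b := 1)).of_isClosed_subset (hclosed 1) ?_
    intro z hz
    exact ⟨fun k => (hz.1 k).1, fun k => (hz.1 k).2⟩
  have hfin : volume (S 1) ≠ ⊤ := hcompact.measure_lt_top.ne
  -- S u = A u for u ≤ 1
  have hSA : ∀ u : ℝ, u ≤ 1 → S u = A u := by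
    intro u hu
    ext z
    constructor
    · rintro ⟨h1, h2⟩; exact ⟨fun k => (h1 k).1, h2⟩
    · rintro ⟨h1, h2⟩
      refine ⟨fun k => ⟨h1 k, ?_⟩, h2⟩
      have hk1 : z k ^ ε ≤ 1 :=
        le_trans (Finset.single_le_sum (fun j _ => Real.rpow_nonneg (h1 j) ε)
          (Finset.mem_univ k)) (h2.trans hu)
      by_contra hc
      push_neg at hc
      have := (Real.one_lt_rpow_iff_of_pos (lt_trans one_pos hc)).mpr (Or.inl ⟨hc, hε⟩)
      linarith
  -- scaling law
  have hscale : ∀ t ∈ Set.Ioc (0:ℝ) 1,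
      volume (S t) = ENNReal.ofReal (t ^ ((K:ℝ)/ε)) * volume (S 1) := by
    rintro t ⟨ht0, ht1⟩
    set r : ℝ := t ^ (1/ε) with hrdef
    have hr : 0 < r := Real.rpow_pos_of_pos ht0 _
    have hrinv : r⁻¹ ^ ε = t⁻¹ := by
      rw [hrdef, Real.inv_rpow (Real.rpow_nonneg ht0.le _), ← Real.rpow_mul ht0.le,
        one_div_mul_cancel hε.ne', Real.rpow_one]
    have key : ∀ z : Fin K → ℝ, (∀ k, 0 ≤ z k) →
        ∑ k, (r⁻¹ * z k) ^ ε = t⁻¹ * ∑ k, z k ^ ε := by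
      intro z hz
      rw [Finset.mul_sum]
      refine Finset.sum_congr rfl fun k _ => ?_
      rw [Real.mul_rpow (inv_nonneg.mpr hr.le) (hz k), hrinv]
    have hAsmul : A t = r • A 1 := by
      ext z
      rw [Set.mem_smul_set_iff_inv_smul_mem₀ hr.ne']
      simp only [hAdef, Set.mem_setOf_eq, Pi.smul_apply, smul_eq_mul]
      constructor
      · rintro ⟨hnn, hsum⟩
        refine ⟨fun k => mul_nonneg (inv_nonneg.mpr hr.le) (hnn k), ?_⟩
        rw [key z hnn]
        calc t⁻¹ * ∑ k, z k ^ ε ≤ t⁻¹ * t :=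
              mul_le_mul_of_nonneg_left hsum (inv_nonneg.mpr ht0.le)
          _ = 1 := inv_mul_cancel₀ ht0.ne'
      · rintro ⟨hnn, hsum⟩
        have hz : ∀ k, 0 ≤ z k := by
          intro k
          have h := hnn k
          by_contra hc
          push_neg at hc
          nlinarith [inv_pos.mpr hr]
        refine ⟨hz, ?_⟩
        rw [key z hz] at hsum
        calc ∑ k, z k ^ ε = t * (t⁻¹ * ∑ k, z k ^ ε) := by
              rw [← mul_assoc, mul_inv_cancel₀ ht0.ne', one_mul]
          _ ≤ t * 1 := mul_le_mul_of_nonneg_left hsum ht0.le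
          _ = t := mul_one t
    have hrK : r ^ K = t ^ ((K:ℝ)/ε) := by
      rw [hrdef, ← Real.rpow_natCast (t ^ (1/ε)) K, ← Real.rpow_mul ht0.le]
      congr 1
      ring
    rw [hSA t ht1, hSA 1 le_rfl, hAsmul, Measure.addHaar_smul,
      Module.finrank_fin_fun, abs_of_nonneg (pow_nonneg hr.le K), hrK]
  -- integrability and nonnegativity
  have hint : IntegrableOn f (S 1) := hcont.continuousOn.integrableOn_compact hcompact
  have f_nn : 0 ≤ᵐ[volume.restrict (S 1)] f := by
    filter_upwards [ae_restrict_mem (hmeas 1)] with z hz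
    exact Finset.sum_nonneg fun k _ => Real.rpow_nonneg ((hz.1 k).1) ε
  have hlevel_meas : ∀ t : ℝ, MeasurableSet {a | t < f a} := fun t =>
    (isOpen_lt continuous_const hcont).measurableSet
  set Vr : ℝ := (volume (S 1)).toReal with hVr
  show (∫ z in S 1, f z) = Vr * K / (K + ε)
  rw [hint.integral_eq_integral_meas_lt f_nn]
  -- the restricted measure applied
  have hrestrict : ∀ t : ℝ, (volume.restrict (S 1)) {a | t < f a}
      = volume ({a | t < f a} ∩ S 1) := fun t => Measure.restrict_apply (hlevel_meas t)
  -- vanishing outside (0,1]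
  have hzero : ∀ t ∈ Set.Ioi (0:ℝ) \ Set.Ioc 0 1,
      ((volume.restrict (S 1)) {a | t < f a}).toReal = 0 := by
    rintro t ⟨ht0, htc⟩
    have ht1 : 1 < t := by
      simp only [Set.mem_Ioc, not_and, not_le] at htc
      exact htc ht0
    rw [hrestrict]
    have : {a | t < f a} ∩ S 1 = ∅ := by
      ext z
      simp only [Set.mem_inter_iff, Set.mem_setOf_eq, Set.mem_empty_iff_false, iff_false]
      rintro ⟨h1, h2⟩
      exact absurd h2.2 (not_le.mpr (lt_trans ht1 h1))
    rw [this]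
    simp
  simp only [measureReal_def]
  rw [setIntegral_eq_of_subset_of_ae_diff_eq_zero measurableSet_Ioi.nullMeasurableSet
    Set.Ioc_subset_Ioi_self (Filter.Eventually.of_forall fun t ht => hzero t ht)]
  -- value on (0,1]
  have hval : ∀ t ∈ Set.Ioc (0:ℝ) 1,
      ((volume.restrict (S 1)) {a | t < f a}).toReal = Vr - t ^ ((K:ℝ)/ε) * Vr := by
    intro t ht
    have hsub : S t ⊆ S 1 := fun z hz => ⟨hz.1, hz.2.trans ht.2⟩
    have hdiff : {a | t < f a} ∩ S 1 = S 1 \ S t := by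
      ext z
      simp only [Set.mem_inter_iff, Set.mem_setOf_eq, Set.mem_diff, hSdef]
      constructor
      · rintro ⟨h1, h2⟩
        exact ⟨h2, fun hc => absurd h1 (not_lt.mpr hc.2)⟩
      · rintro ⟨h1, h2⟩
        refine ⟨?_, h1⟩
        by_contra hc
        push_neg at hc
        exact h2 ⟨h1.1, hc⟩
    rw [hrestrict, hdiff, measure_diff hsub (hmeas t).nullMeasurableSet
      (ne_top_of_le_ne_top hfin (measure_mono hsub)), hscale t ht]
    have hle1 : t ^ ((K:ℝ)/ε) ≤ 1 :=
      Real.rpow_le_one ht.1.le ht.2 (div_nonneg (Nat.cast_nonneg K) hε.le)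
    have hmle : ENNReal.ofReal (t ^ ((K:ℝ)/ε)) * volume (S 1) ≤ volume (S 1) := by
      calc ENNReal.ofReal (t ^ ((K:ℝ)/ε)) * volume (S 1) ≤ 1 * volume (S 1) :=
            mul_le_mul_left (ENNReal.ofReal_le_one.mpr hle1) _
        _ = volume (S 1) := one_mul _
    rw [ENNReal.toReal_sub_of_le hmle hfin, ENNReal.toReal_mul,
      ENNReal.toReal_ofReal (Real.rpow_nonneg ht.1.le _)]
  rw [setIntegral_congr_fun measurableSet_Ioc hval]
  -- compute the integral
  have hp : (0:ℝ) < (K:ℝ)/ε := div_pos (by exact_mod_cast Nat.one_le_iff_ne_zero.mp hK |> fun h => Nat.pos_of_ne_zero h |> Nat.cast_pos.mpr) hε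
  rw [← intervalIntegral.integral_of_le zero_le_one]
  rw [intervalIntegral.integral_sub intervalIntegrable_const
    ((intervalIntegral.intervalIntegrable_rpow' (by linarith)).mul_const Vr),
    intervalIntegral.integral_const, intervalIntegral.integral_mul_const,
    integral_rpow (Or.inl (by linarith))]
  have h1 : (1:ℝ) ^ ((K:ℝ)/ε + 1) = 1 := Real.one_rpow _
  have h0 : (0:ℝ) ^ ((K:ℝ)/ε + 1) = 0 := Real.zero_rpow (by linarith)
  rw [h1, h0]
  have hKε : (K:ℝ) + ε ≠ 0 := by positivity
  have hKpos : (0:ℝ) < K := by exact_mod_cast Nat.pos_of_ne_zero (Nat.one_le_iff_ne_zero.mp hK)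
  field_simp
  ring
end

section
/- Let ε > 0, and let ν₁, ν₂ > 0 with ν₂ ≥ ν₁. For u with ν₂ ≤ u < ν₁ + ν₂, the Lebesgue measure of {(x,y) ∈ [0,1]² : ν₁x^ε + ν₂y^ε ≤ u} equals ((u-ν₂)/ν₁)^{1/ε} + (Γ(1/ε)²/(2εΓ(2/ε))) · (u²/(ν₁ν₂))^{1/ε} · [F(ν₁/u; 1/ε, 1+1/ε) - F(1 - ν₂/u; 1/ε, 1+1/ε)], where F(·; a, b) denotes the regularized incomplete Beta distribution function with parameters a, b. -/
open MeasureTheory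

/-- Regularized incomplete Beta distribution function
F(x; a, b) = (1/B(a,b)) ∫₀^{(min(x,1))∨0} t^{a-1}(1-t)^{b-1} dt. -/
noncomputable def betaCDF (a b x : ℝ) : ℝ :=
  (Real.Gamma (a + b) / (Real.Gamma a * Real.Gamma b)) *
    ∫ t in Set.Ioc (0:ℝ) (max (min x 1) 0), t ^ (a - 1) * (1 - t) ^ (b - 1)

set_option maxHeartbeats 1600000 in
/-- For ν₂ ≤ u < ν₁ + ν₂ (with 0 < ν₁ ≤ ν₂),
Leb{(x,y) ∈ [0,1]² : ν₁x^ε + ν₂y^ε ≤ u}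
 = ((u-ν₂)/ν₁)^{1/ε} + (Γ(1/ε)²/(2εΓ(2/ε))) (u²/(ν₁ν₂))^{1/ε}
   [F(ν₁/u; 1/ε, 1+1/ε) − F(1 − ν₂/u; 1/ε, 1+1/ε)]. -/
theorem stmt9 (ε : ℝ) (hε : 0 < ε) (ν₁ ν₂ : ℝ) (hν₁ : 0 < ν₁) (hν : ν₁ ≤ ν₂)
    (u : ℝ) (hu : ν₂ ≤ u) (hu' : u < ν₁ + ν₂) :
    (volume {p : ℝ × ℝ | p.1 ∈ Set.Icc (0:ℝ) 1 ∧ p.2 ∈ Set.Icc (0:ℝ) 1 ∧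
        ν₁ * p.1 ^ ε + ν₂ * p.2 ^ ε ≤ u}).toReal
      = ((u - ν₂) / ν₁) ^ (1/ε)
        + Real.Gamma (1/ε) ^ 2 / (2 * ε * Real.Gamma (2/ε)) * (u^2 / (ν₁ * ν₂)) ^ (1/ε)
          * (betaCDF (1/ε) (1 + 1/ε) (ν₁ / u) - betaCDF (1/ε) (1 + 1/ε) (1 - ν₂ / u)) := by
  have hν₂ : 0 < ν₂ := lt_of_lt_of_le hν₁ hν
  have hu0 : 0 < u := lt_of_lt_of_le hν₂ hu
  have hε' : (0:ℝ) < 1/ε := by positivity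
  -- basic quantities
  set m : ℝ → ℝ := fun x => ((u - ν₁ * x ^ ε) / ν₂) ^ (1/ε) with hm
  set y₀ : ℝ := (u - ν₂) / ν₁ with hy₀def
  have hy₀0 : 0 ≤ y₀ := div_nonneg (by linarith) hν₁.le
  have hy₀1 : y₀ < 1 := (div_lt_one hν₁).mpr (by linarith)
  set x₀ : ℝ := y₀ ^ (1/ε) with hx₀def
  have hx₀0 : 0 ≤ x₀ := Real.rpow_nonneg hy₀0 _
  have hx₀1 : x₀ < 1 := Real.rpow_lt_one hy₀0 hy₀1 hε'
  have hx₀ε : x₀ ^ ε = y₀ := by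
    rw [hx₀def, one_div]; exact Real.rpow_inv_rpow hy₀0 hε.ne'
  have hνy₀ : ν₁ * y₀ = u - ν₂ := by rw [hy₀def]; field_simp
  set t₀ : ℝ := 1 - ν₂ / u with ht₀def
  set t₁ : ℝ := ν₁ / u with ht₁def
  have ht₀0 : 0 ≤ t₀ := by
    rw [ht₀def, sub_nonneg, div_le_one hu0]; exact hu
  have ht₁0 : 0 < t₁ := by positivity
  have ht₁1 : t₁ ≤ 1 := (div_le_one hu0).mpr (hν.trans hu)
  have ht₀t₁ : t₀ < t₁ := by
    rw [ht₀def, ht₁def, sub_lt_iff_lt_add, ← add_div, lt_div_iff₀ hu0, one_mul]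
    linarith
  have hct₀ : ν₁ / u * y₀ = t₀ := by
    rw [ht₀def, hy₀def]; field_simp
  -- continuity facts
  have hcont_pow : Continuous fun x : ℝ => x ^ ε := Real.continuous_rpow_const hε.le
  have hcont_m : Continuous m := by
    exact (Real.continuous_rpow_const hε'.le).comp
      ((continuous_const.sub (continuous_const.mul hcont_pow)).div_const _)
  -- Step 1 : Fubini
  set S : Set (ℝ × ℝ) := {p : ℝ × ℝ | p.1 ∈ Set.Icc (0:ℝ) 1 ∧ p.2 ∈ Set.Icc (0:ℝ) 1 ∧
      ν₁ * p.1 ^ ε + ν₂ * p.2 ^ ε ≤ u} with hSdef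
  have hmeas_f : Measurable fun p : ℝ × ℝ => ν₁ * p.1 ^ ε + ν₂ * p.2 ^ ε := by
    have : Continuous fun p : ℝ × ℝ => ν₁ * p.1 ^ ε + ν₂ * p.2 ^ ε :=
      ((continuous_const.mul (hcont_pow.comp continuous_fst))).add
        ((continuous_const.mul (hcont_pow.comp continuous_snd)))
    exact this.measurable
  have hS : MeasurableSet S := by
    have hrw : S = (Set.Icc (0:ℝ) 1 ×ˢ Set.Icc (0:ℝ) 1) ∩
        {p : ℝ × ℝ | ν₁ * p.1 ^ ε + ν₂ * p.2 ^ ε ≤ u} := by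
      ext p
      simp only [hSdef, Set.mem_setOf_eq, Set.mem_inter_iff, Set.mem_prod]
      tauto
    rw [hrw]
    exact (measurableSet_Icc.prod measurableSet_Icc).inter
      (measurableSet_le hmeas_f measurable_const)
  have hslice : ∀ x : ℝ, Prod.mk x ⁻¹' S =
      if x ∈ Set.Icc (0:ℝ) 1 then Set.Icc 0 (min 1 (m x)) else ∅ := by
    intro x
    split_ifs with hx
    · ext y
      have hx0 : (0:ℝ) ≤ x := hx.1
      have hxε1 : x ^ ε ≤ 1 := Real.rpow_le_one hx0 hx.2 hε.le
      have hxε0 : 0 ≤ x ^ ε := Real.rpow_nonneg hx0 _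
      have hA0 : 0 ≤ u - ν₁ * x ^ ε := by nlinarith
      simp only [Set.mem_preimage, hSdef, Set.mem_setOf_eq, Set.mem_Icc]
      constructor
      · rintro ⟨-, ⟨hy0, hy1⟩, hle⟩
        refine ⟨hy0, le_min hy1 ?_⟩
        have h1 : y ^ ε ≤ (u - ν₁ * x ^ ε) / ν₂ := by
          rw [le_div_iff₀ hν₂]; nlinarith
        calc y = (y ^ ε) ^ (1/ε) := by
              rw [one_div, Real.rpow_rpow_inv hy0 hε.ne']
          _ ≤ m x := Real.rpow_le_rpow (Real.rpow_nonneg hy0 _) h1 hε'.le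
      · rintro ⟨hy0, hy⟩
        have hy1 : y ≤ 1 := hy.trans (min_le_left _ _)
        refine ⟨hx, ⟨hy0, hy1⟩, ?_⟩
        have h2 : y ^ ε ≤ (u - ν₁ * x ^ ε) / ν₂ := by
          have h3 := Real.rpow_le_rpow hy0 (hy.trans (min_le_right _ _)) hε.le
          rwa [hm, one_div, Real.rpow_inv_rpow (by positivity) hε.ne'] at h3
        rw [le_div_iff₀ hν₂] at h2; nlinarith
    · ext y
      simp only [Set.mem_preimage, hSdef, Set.mem_setOf_eq, Set.mem_empty_iff_false, iff_false]
      exact fun h => hx h.1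
  rw [Measure.volume_eq_prod, Measure.prod_apply hS]
  have hlint : ∫⁻ x, volume (Prod.mk x ⁻¹' S) =
      ∫⁻ x in Set.Icc (0:ℝ) 1, ENNReal.ofReal (min 1 (m x)) := by
    rw [← lintegral_indicator measurableSet_Icc]
    refine lintegral_congr fun x => ?_
    rw [hslice x]
    by_cases hx : x ∈ Set.Icc (0:ℝ) 1
    · rw [if_pos hx, Set.indicator_of_mem hx, Real.volume_Icc, sub_zero]
    · rw [if_neg hx, Set.indicator_of_notMem hx, measure_empty]
  rw [hlint]
  have hmin_meas : AEStronglyMeasurable (fun x => min 1 (m x))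
      (volume.restrict (Set.Icc (0:ℝ) 1)) :=
    (continuous_const.min hcont_m).aestronglyMeasurable
  have hmin_nonneg : 0 ≤ᵐ[volume.restrict (Set.Icc (0:ℝ) 1)] fun x => min 1 (m x) := by
    filter_upwards [ae_restrict_mem measurableSet_Icc] with x hx
    have hxε1 : x ^ ε ≤ 1 := Real.rpow_le_one hx.1 hx.2 hε.le
    have hA0 : 0 ≤ (u - ν₁ * x ^ ε) / ν₂ := by
      apply div_nonneg _ hν₂.le; nlinarith
    exact le_min zero_le_one (Real.rpow_nonneg hA0 _)
  rw [← integral_eq_lintegral_of_nonneg_ae hmin_nonneg hmin_meas]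
  rw [integral_Icc_eq_integral_Ioc, ← intervalIntegral.integral_of_le zero_le_one]
  have hII1 : IntervalIntegrable (fun x => min 1 (m x)) volume 0 x₀ :=
    (continuous_const.min hcont_m).intervalIntegrable _ _
  have hII2 : IntervalIntegrable (fun x => min 1 (m x)) volume x₀ 1 :=
    (continuous_const.min hcont_m).intervalIntegrable _ _
  rw [← intervalIntegral.integral_add_adjacent_intervals hII1 hII2]
  have hpart1 : ∫ x in (0:ℝ)..x₀, min 1 (m x) = x₀ := by
    rw [intervalIntegral.integral_congr (g := fun _ => (1:ℝ)) ?_]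
    · simp
    · intro x hx
      rw [Set.uIcc_of_le hx₀0] at hx
      have hx0 : (0:ℝ) ≤ x := hx.1
      have hxy : x ^ ε ≤ y₀ := by
        calc x ^ ε ≤ x₀ ^ ε := Real.rpow_le_rpow hx0 hx.2 hε.le
          _ = y₀ := hx₀ε
      have h1m : (1:ℝ) ≤ m x := by
        have hb : (1:ℝ) ≤ (u - ν₁ * x ^ ε) / ν₂ := by
          rw [le_div_iff₀ hν₂]; nlinarith
        calc (1:ℝ) = 1 ^ (1/ε) := (Real.one_rpow _).symm
          _ ≤ m x := Real.rpow_le_rpow zero_le_one hb hε'.le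
      exact min_eq_left h1m
  have hpart2 : ∫ x in x₀..(1:ℝ), min 1 (m x) = ∫ x in x₀..(1:ℝ), m x := by
    apply intervalIntegral.integral_congr
    intro x hx
    rw [Set.uIcc_of_le hx₀1.le] at hx
    have hx0 : (0:ℝ) ≤ x := hx₀0.trans hx.1
    have hxε1 : x ^ ε ≤ 1 := Real.rpow_le_one hx0 hx.2 hε.le
    have hyε : y₀ ≤ x ^ ε := by
      calc y₀ = x₀ ^ ε := hx₀ε.symm
        _ ≤ x ^ ε := Real.rpow_le_rpow hx₀0 hx.1 hε.le
    have hA0 : 0 ≤ u - ν₁ * x ^ ε := by nlinarith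
    have hmle : m x ≤ 1 := by
      apply Real.rpow_le_one (by positivity) _ hε'.le
      rw [div_le_one hν₂]; nlinarith
    exact min_eq_right hmle
  rw [hpart1, hpart2]
  congr 1
  -- Step 2 : the incomplete beta part
  have hΓ1 : 0 < Real.Gamma (1/ε) := Real.Gamma_pos_of_pos hε'
  have hΓ2 : 0 < Real.Gamma (2/ε) := Real.Gamma_pos_of_pos (by positivity)
  have hclamp : ∀ t : ℝ, 0 ≤ t → t ≤ 1 → max (min t 1) 0 = t := by
    intro t h0 h1; rw [min_eq_left h1, max_eq_left h0]
  have hb1 : (1:ℝ) + 1/ε - 1 = 1/ε := by ring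
  set φ : ℝ → ℝ := fun t => t ^ (1/ε - 1) * (1 - t) ^ (1/ε) with hφdef
  -- integrability of φ on (0, t₁]
  have hφmeas : AEStronglyMeasurable φ (volume.restrict (Set.Ioc (0:ℝ) t₁)) := by
    apply ContinuousOn.aestronglyMeasurable _ measurableSet_Ioc
    apply ContinuousOn.mul
    · exact ContinuousOn.rpow_const continuousOn_id (fun t ht => Or.inl ht.1.ne')
    · exact ContinuousOn.rpow_const (continuous_const.sub continuous_id).continuousOn
        (fun t _ => Or.inr hε'.le)
  have hbase : IntegrableOn (fun t : ℝ => t ^ (1/ε - 1)) (Set.Ioc (0:ℝ) t₁) := by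
    have h := intervalIntegral.intervalIntegrable_rpow' (a := 0) (b := t₁) (show (-1:ℝ) < 1/ε - 1 by linarith)
    rwa [intervalIntegrable_iff_integrableOn_Ioc_of_le ht₁0.le] at h
  have hint : IntegrableOn φ (Set.Ioc (0:ℝ) t₁) := by
    apply Integrable.mono hbase hφmeas
    filter_upwards [ae_restrict_mem measurableSet_Ioc] with t ht
    have ht0 : 0 < t := ht.1
    have ht1 : t ≤ 1 := ht.2.trans ht₁1
    have h1t : 0 ≤ 1 - t := by linarith
    rw [Real.norm_eq_abs, Real.norm_eq_abs,
      abs_of_nonneg (mul_nonneg (Real.rpow_nonneg ht0.le _) (Real.rpow_nonneg h1t _)),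
      abs_of_nonneg (Real.rpow_nonneg ht0.le _)]
    nth_rewrite 2 [← mul_one (t ^ (1/ε - 1))]
    exact mul_le_mul_of_nonneg_left
      (Real.rpow_le_one h1t (by linarith) hε'.le) (Real.rpow_nonneg ht0.le _)
  have hint₀ : IntegrableOn φ (Set.Ioc (0:ℝ) t₀) :=
    hint.mono_set (Set.Ioc_subset_Ioc_right ht₀t₁.le)
  have hint₁ : IntegrableOn φ (Set.Ioc t₀ t₁) :=
    hint.mono_set (Set.Ioc_subset_Ioc_left ht₀0)
  have hFdiff : betaCDF (1/ε) (1 + 1/ε) t₁ - betaCDF (1/ε) (1 + 1/ε) t₀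
      = (Real.Gamma (1/ε + (1 + 1/ε)) / (Real.Gamma (1/ε) * Real.Gamma (1 + 1/ε)))
        * ∫ t in Set.Ioc t₀ t₁, φ t := by
    unfold betaCDF
    rw [hclamp t₁ ht₁0.le ht₁1, hclamp t₀ ht₀0 (by linarith), ← mul_sub]
    congr 1
    simp only [hb1]
    rw [← Set.Ioc_union_Ioc_eq_Ioc ht₀0 ht₀t₁.le,
      setIntegral_union (Set.Ioc_disjoint_Ioc_of_le le_rfl) measurableSet_Ioc hint₀ hint₁]
    rw [hφdef]
    ring
  rw [hFdiff]
  -- combine the Gamma constants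
  have hΓadd : Real.Gamma (1/ε + (1 + 1/ε)) = (2/ε) * Real.Gamma (2/ε) := by
    have h1 : (1:ℝ)/ε + (1 + 1/ε) = 2/ε + 1 := by ring
    rw [h1, Real.Gamma_add_one (by positivity)]
  have hΓb : Real.Gamma (1 + 1/ε) = (1/ε) * Real.Gamma (1/ε) := by
    rw [add_comm, Real.Gamma_add_one hε'.ne']
  have hcoeff : Real.Gamma (1/ε) ^ 2 / (2 * ε * Real.Gamma (2/ε)) * (u^2 / (ν₁ * ν₂)) ^ (1/ε)
      * ((Real.Gamma (1/ε + (1 + 1/ε)) / (Real.Gamma (1/ε) * Real.Gamma (1 + 1/ε)))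
          * ∫ t in Set.Ioc t₀ t₁, φ t)
      = (1/ε) * (u^2 / (ν₁ * ν₂)) ^ (1/ε) * ∫ t in Set.Ioc t₀ t₁, φ t := by
    rw [hΓadd, hΓb]
    field_simp
  rw [hcoeff]
  -- Step 3 : linear change of variables t = (ν₁/u) * y
  have hlin : ∫ t in Set.Ioc t₀ t₁, φ t = (ν₁/u) * ∫ y in y₀..(1:ℝ), φ (ν₁/u * y) := by
    have h := intervalIntegral.integral_comp_mul_left (a := y₀) (b := 1) φ
      (show ν₁/u ≠ 0 by positivity)
    rw [hct₀, mul_one] at h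
    rw [← intervalIntegral.integral_of_le ht₀t₁.le, h, smul_eq_mul]
    field_simp
    rw [← ht₁def]
  rw [hlin]
  -- Step 4 : power change of variables y = x^ε
  have hy₀lt1 : y₀ ≤ 1 := hy₀1.le
  have himg : (fun x : ℝ => x ^ ε) '' Set.Ioo x₀ 1 = Set.Ioo y₀ 1 := by
    ext y
    constructor
    · rintro ⟨x, ⟨hx1, hx2⟩, rfl⟩
      have hx0 : 0 < x := hx₀0.trans_lt hx1
      constructor
      · calc y₀ = x₀ ^ ε := hx₀ε.symm
          _ < x ^ ε := Real.rpow_lt_rpow hx₀0 hx1 hε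
      · calc x ^ ε < 1 ^ ε := Real.rpow_lt_rpow hx0.le hx2 hε
          _ = 1 := Real.one_rpow ε
    · rintro ⟨hy1, hy2⟩
      have hy0 : 0 ≤ y := hy₀0.trans hy1.le
      refine ⟨y ^ (1/ε), ⟨?_, ?_⟩, ?_⟩
      · rw [hx₀def]; exact Real.rpow_lt_rpow hy₀0 hy1 hε'
      · calc y ^ (1/ε) < 1 ^ (1/ε) := Real.rpow_lt_rpow hy0 hy2 hε'
          _ = 1 := Real.one_rpow _
      · rw [one_div]; exact Real.rpow_inv_rpow hy0 hε.ne'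
  have hderiv : ∀ x ∈ Set.Ioo x₀ (1:ℝ), HasDerivWithinAt (fun x : ℝ => x ^ ε)
      (ε * x ^ (ε - 1)) (Set.Ioo x₀ 1) x := fun x hx =>
    (Real.hasDerivAt_rpow_const (Or.inl (hx₀0.trans_lt hx.1).ne')).hasDerivWithinAt
  have hinj : Set.InjOn (fun x : ℝ => x ^ ε) (Set.Ioo x₀ 1) := by
    have hmono : StrictMonoOn (fun x : ℝ => x ^ ε) (Set.Ioo x₀ 1) := fun p hp q hq hpq =>
      Real.rpow_lt_rpow (hx₀0.trans hp.1.le) hpq hε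
    exact hmono.injOn
  have hchg := integral_image_eq_integral_abs_deriv_smul measurableSet_Ioo hderiv hinj
    (fun y => φ (ν₁/u * y))
  rw [himg] at hchg
  rw [intervalIntegral.integral_of_le hy₀lt1, integral_Ioc_eq_integral_Ioo, hchg]
  -- Step 5 : pointwise identity and conclusion
  rw [intervalIntegral.integral_of_le hx₀1.le, integral_Ioc_eq_integral_Ioo]
  rw [← integral_const_mul, ← integral_const_mul]
  apply setIntegral_congr_fun measurableSet_Ioo
  intro x hx
  have hx0 : 0 < x := hx₀0.trans_lt hx.1
  have hx1 : x < 1 := hx.2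
  have hxε0 : 0 < x ^ ε := Real.rpow_pos_of_pos hx0 _
  have hxε1 : x ^ ε < 1 := by
    calc x ^ ε < 1 ^ ε := Real.rpow_lt_rpow hx0.le hx1 hε
      _ = 1 := Real.one_rpow ε
  have hA : 0 < u - ν₁ * x ^ ε := by nlinarith
  have hc : (0:ℝ) < ν₁ / u := by positivity
  have h1c : 1 - ν₁/u * x ^ ε = (u - ν₁ * x ^ ε) / u := by field_simp
  simp only [smul_eq_mul, hφdef, hm]
  rw [h1c, abs_of_pos (by positivity),
    Real.mul_rpow hc.le hxε0.le, ← Real.rpow_mul hx0.le]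
  have hεe : ε * (1/ε - 1) = 1 - ε := by field_simp
  rw [hεe]
  have e1 : x ^ (ε - 1) * x ^ (1 - ε) = 1 := by
    rw [← Real.rpow_add hx0]; norm_num
  have e2 : (ν₁/u) * (ν₁/u) ^ (1/ε - 1) = (ν₁/u) ^ (1/ε) := by
    nth_rewrite 1 [← Real.rpow_one (ν₁/u)]
    rw [← Real.rpow_add hc]; ring_nf
  have e3 : (u^2 / (ν₁ * ν₂)) ^ (1/ε) * ((ν₁/u) ^ (1/ε) * ((u - ν₁ * x ^ ε)/u) ^ (1/ε))
      = ((u - ν₁ * x ^ ε)/ν₂) ^ (1/ε) := by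
    rw [← Real.mul_rpow hc.le (by positivity), ← Real.mul_rpow (by positivity)
      (mul_nonneg hc.le (by positivity))]
    congr 1
    field_simp
  symm
  calc 1/ε * (u^2 / (ν₁ * ν₂)) ^ (1/ε) * ((ν₁/u) *
        (ε * x ^ (ε - 1) * ((ν₁/u) ^ (1/ε - 1) * x ^ (1 - ε)
          * ((u - ν₁ * x ^ ε)/u) ^ (1/ε))))
      = (1/ε * ε) * ((x ^ (ε - 1) * x ^ (1 - ε)) * ((u^2 / (ν₁ * ν₂)) ^ (1/ε)
          * (((ν₁/u) * (ν₁/u) ^ (1/ε - 1)) * ((u - ν₁ * x ^ ε)/u) ^ (1/ε)))) := by ring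
    _ = ((u - ν₁ * x ^ ε)/ν₂) ^ (1/ε) := by
        rw [e1, e2, one_div_mul_cancel hε.ne', one_mul, one_mul, e3]
end

section
/- Define H(t) = ln(t·Γ(t)/(1+t)^t) for t > 0. Then H is strictly concave on (0,∞); in particular H''(t) = ψ'(t) − 1/t² − 1/(1+t)² − 1/(1+t) < 0 for all t > 0, where ψ' is the trigamma function. -/
/-- H(t) = ln(t·Γ(t)/(1+t)^t). -/
noncomputable def Hfun (t : ℝ) : ℝ := Real.log (t * Real.Gamma t / (1 + t) ^ t)

section auxiliary

open Real Filter Set Finset Topology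

lemma base_summable : Summable (fun m : ℕ => (((m:ℝ)+1))⁻¹ ^ 2) := by
  have h : Summable (fun n : ℕ => 1 / (n : ℝ) ^ 2) :=
    Real.summable_one_div_nat_pow.2 one_lt_two
  have := (summable_nat_add_iff (f := fun n : ℕ => 1 / (n : ℝ) ^ 2) 1).2 h
  apply this.congr
  intro m; push_cast; rw [one_div, inv_pow]

lemma scaled_summable (a : ℝ) (ha : 0 < a) :
    Summable (fun m : ℕ => ((a*((m:ℝ)+1))⁻¹) ^ 2) := by
  apply (base_summable.mul_left (a⁻¹ ^ 2)).congr
  intro m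
  rw [mul_inv, mul_pow]

noncomputable def psiAux (t : ℝ) : ℝ := ∑' m : ℕ, ((((m:ℝ)+1))⁻¹ - (t+(m:ℝ))⁻¹)

noncomputable def psiR (t : ℝ) : ℝ := -Real.eulerMascheroniConstant + psiAux t

noncomputable def trig (t : ℝ) : ℝ := ∑' k : ℕ, 1 / ((k : ℝ) + t) ^ 2

-- key pointwise bounds on Ioo a b, with 0 < a ≤ 1
lemma key_le {a b x : ℝ} (ha1 : a ≤ 1) (hx : x ∈ Set.Ioo a b) (m : ℕ) :
    a * ((m:ℝ)+1) ≤ x + m := by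
  obtain ⟨h1, _⟩ := hx
  nlinarith [Nat.cast_nonneg (α := ℝ) m]

lemma bound_trig {a b x : ℝ} (ha : 0 < a) (ha1 : a ≤ 1) (hx : x ∈ Set.Ioo a b) (m : ℕ) :
    ‖1 / ((m:ℝ) + x) ^ 2‖ ≤ ((a*((m:ℝ)+1))⁻¹) ^ 2 := by
  have h0 : (0:ℝ) < a * ((m:ℝ)+1) := by positivity
  have h1 : a * ((m:ℝ)+1) ≤ m + x := by have := key_le ha1 hx m; linarith
  have h2 : (0:ℝ) < m + x := lt_of_lt_of_le h0 h1
  rw [Real.norm_eq_abs, abs_of_nonneg (by positivity), one_div, ← inv_pow]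
  gcongr

lemma bound_f {a b x : ℝ} (ha : 0 < a) (ha1 : a ≤ 1) (hb : 0 < b) (hx : x ∈ Set.Ioo a b) (m : ℕ) :
    ‖(((m:ℝ)+1))⁻¹ - (x+(m:ℝ))⁻¹‖ ≤ (b+1) * ((a*((m:ℝ)+1))⁻¹) ^ 2 := by
  have h0 : (0:ℝ) < a * ((m:ℝ)+1) := by positivity
  have hxm : (0:ℝ) < x + m := lt_of_lt_of_le h0 (key_le ha1 hx m)
  have hm1 : (0:ℝ) < (m:ℝ) + 1 := by positivity
  have heq : (((m:ℝ)+1))⁻¹ - (x+(m:ℝ))⁻¹ = (x - 1) / (((m:ℝ)+1) * (x+(m:ℝ))) := by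
    field_simp; ring
  rw [heq, Real.norm_eq_abs, abs_div, abs_of_pos (show (0:ℝ) < ((m:ℝ)+1) * (x+(m:ℝ)) by positivity)]
  have hx1 : |x - 1| ≤ b + 1 := by
    rw [abs_le]; constructor <;> nlinarith [hx.1, hx.2]
  have hden : (a*((m:ℝ)+1))^2 ≤ ((m:ℝ)+1) * (x+(m:ℝ)) := by
    have := key_le ha1 hx m
    nlinarith [Nat.cast_nonneg (α := ℝ) m]
  calc |x-1| / (((m:ℝ)+1) * (x+(m:ℝ))) ≤ (b+1) / (a*((m:ℝ)+1))^2 := by gcongr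
    _ = (b+1) * ((a*((m:ℝ)+1))⁻¹) ^ 2 := by rw [div_eq_mul_inv, inv_pow]

lemma trig_summable {t : ℝ} (ht : 0 < t) : Summable (fun k : ℕ => 1 / ((k : ℝ) + t) ^ 2) := by
  set a := min t 1 / 2 with hadef
  have ha : 0 < a := by positivity
  have ha1 : a ≤ 1 := by
    have : min t 1 ≤ 1 := min_le_right _ _
    simp only [hadef]; linarith
  have hx : t ∈ Set.Ioo a (t+1) := ⟨by
    have : min t 1 ≤ t := min_le_left _ _
    simp only [hadef]; linarith, by linarith⟩
  exact (scaled_summable a ha).of_norm_bounded (fun m => bound_trig ha ha1 hx m)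

lemma f_summable {t : ℝ} (ht : 0 < t) :
    Summable (fun m : ℕ => ((((m:ℝ)+1))⁻¹ - (t+(m:ℝ))⁻¹)) := by
  set a := min t 1 / 2 with hadef
  have ha : 0 < a := by positivity
  have ha1 : a ≤ 1 := by
    have : min t 1 ≤ 1 := min_le_right _ _
    simp only [hadef]; linarith
  have hx : t ∈ Set.Ioo a (t+1) := ⟨by
    have : min t 1 ≤ t := min_le_left _ _
    simp only [hadef]; linarith, by linarith⟩
  exact ((scaled_summable a ha).mul_left (t+1+1)).of_norm_bounded
    (fun m => bound_f ha ha1 (by linarith) hx m)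

-- uniform convergence of partial sums of 1/(m+x)^2 to trig on Ioo a b
lemma trig_unif {a b : ℝ} (ha : 0 < a) (ha1 : a ≤ 1) :
    TendstoUniformlyOn (fun N x => ∑ m ∈ Finset.range N, 1 / ((m:ℝ) + x) ^ 2) trig
      atTop (Set.Ioo a b) := by
  apply tendstoUniformlyOn_tsum_nat (scaled_summable a ha)
  intro m x hx
  exact bound_trig ha ha1 hx m

lemma psiAux_unif {a b : ℝ} (ha : 0 < a) (ha1 : a ≤ 1) (hb : 0 < b) :
    TendstoUniformlyOn (fun N x => ∑ m ∈ Finset.range N, ((((m:ℝ)+1))⁻¹ - (x+(m:ℝ))⁻¹))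
      psiAux atTop (Set.Ioo a b) := by
  apply tendstoUniformlyOn_tsum_nat ((scaled_summable a ha).mul_left (b+1))
  intro m x hx
  exact bound_f ha ha1 hb hx m

-- Lemma B : derivative of psiR
lemma hasDerivAt_psiR {t : ℝ} (ht : 0 < t) : HasDerivAt psiR (trig t) t := by
  set a := min t 1 / 2 with hadef
  have ha : 0 < a := by positivity
  have ha1 : a ≤ 1 := by
    have : min t 1 ≤ 1 := min_le_right _ _
    simp only [hadef]; linarith
  set b := t + 1 with hbdef
  have hx : t ∈ Set.Ioo a b := ⟨by
    have : min t 1 ≤ t := min_le_left _ _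
    simp only [hadef, hbdef]; linarith, by simp only [hbdef]; linarith⟩
  refine hasDerivAt_of_tendstoUniformlyOn (f := fun N x =>
      -Real.eulerMascheroniConstant + ∑ m ∈ Finset.range N, ((((m:ℝ)+1))⁻¹ - (x+(m:ℝ))⁻¹))
      (f' := fun N x => ∑ m ∈ Finset.range N, 1 / ((m:ℝ) + x) ^ 2) isOpen_Ioo
      (trig_unif ha ha1) ?_ ?_ hx
  · filter_upwards with N x hxs
    have : HasDerivAt (fun y => ∑ m ∈ Finset.range N, ((((m:ℝ)+1))⁻¹ - (y+(m:ℝ))⁻¹))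
        (∑ m ∈ Finset.range N, 1 / ((m:ℝ) + x) ^ 2) x := by
      apply HasDerivAt.fun_sum
      intro m _
      have hxm0 : (0:ℝ) < x + (m:ℝ) := lt_of_lt_of_le (by positivity) (key_le ha1 hxs m)
      have hxm : x + (m:ℝ) ≠ 0 := ne_of_gt hxm0
      have h1 : HasDerivAt (fun y : ℝ => y + (m:ℝ)) 1 x := (hasDerivAt_id x).add_const _
      have h2 : HasDerivAt (fun y : ℝ => (y+(m:ℝ))⁻¹) (-(1 / (x+(m:ℝ))^2)) x := by
        simpa [neg_div] using h1.fun_inv hxm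
      simpa [add_comm (m:ℝ) x] using (hasDerivAt_const x ((((m:ℝ)+1))⁻¹)).fun_sub h2
    exact this.const_add _
  · intro x hxs
    have hxx : 0 < x := lt_trans ha hxs.1
    exact (tendsto_const_nhds).add ((f_summable hxx).hasSum.tendsto_sum_nat)

-- shift lemma for uniform convergence
lemma TendstoUniformlyOn.shift {α β : Type*} [UniformSpace β] {F : ℕ → α → β} {g : α → β}
    {s : Set α} (h : TendstoUniformlyOn F g atTop s) :
    TendstoUniformlyOn (fun n => F (n+1)) g atTop s := fun u hu =>
  (tendsto_add_atTop_nat 1).eventually (h u hu)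

-- the constant sequence c n = log n - harmonic (n+1)
noncomputable def cseq (n : ℕ) : ℝ := Real.log n - ∑ m ∈ Finset.range (n+1), (((m:ℝ))+1)⁻¹

lemma harmonic_real (N : ℕ) : ((harmonic N : ℚ) : ℝ) = ∑ m ∈ Finset.range N, (((m:ℝ))+1)⁻¹ := by
  rw [harmonic]
  push_cast
  rfl

lemma tendsto_cseq : Tendsto cseq atTop (𝓝 (-Real.eulerMascheroniConstant)) := by
  have h1 : Tendsto (fun n : ℕ => Real.eulerMascheroniSeq' (n+1)) atTop
      (𝓝 Real.eulerMascheroniConstant) :=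
    Real.tendsto_eulerMascheroniSeq'.comp (tendsto_add_atTop_nat 1)
  have h2 := Real.tendsto_log_nat_add_one_sub_log
  have key : ∀ n : ℕ, cseq n = -(Real.eulerMascheroniSeq' (n+1)) - (Real.log ((n:ℝ)+1) - Real.log n) := by
    intro n
    rw [cseq, Real.eulerMascheroniSeq', if_neg (Nat.succ_ne_zero n), ← harmonic_real]
    push_cast
    ring
  rw [show (-Real.eulerMascheroniConstant) = -Real.eulerMascheroniConstant - 0 by ring]
  exact Tendsto.congr (fun n => (key n).symm) ((h1.neg).sub h2)

-- Lemma A : derivative of log Gamma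
lemma hasDerivAt_logGamma {t : ℝ} (ht : 0 < t) :
    HasDerivAt (fun x => Real.log (Real.Gamma x)) (psiR t) t := by
  set a := min t 1 / 2 with hadef
  have ha : 0 < a := by positivity
  have ha1 : a ≤ 1 := by
    have : min t 1 ≤ 1 := min_le_right _ _
    simp only [hadef]; linarith
  set b := t + 1 with hbdef
  have hb : 0 < b := by simp only [hbdef]; linarith
  have hx : t ∈ Set.Ioo a b := ⟨by
    have : min t 1 ≤ t := min_le_left _ _
    simp only [hadef, hbdef]; linarith, by simp only [hbdef]; linarith⟩
  refine hasDerivAt_of_tendstoUniformlyOn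
      (f := fun (n : ℕ) x => Real.BohrMollerup.logGammaSeq x n)
      (f' := fun (n : ℕ) x => Real.log n - ∑ m ∈ Finset.range (n+1), (x+(m:ℝ))⁻¹)
      (l := atTop) isOpen_Ioo ?_ ?_ ?_ hx
  · -- uniform convergence of derivatives to psiR
    have hconst : TendstoUniformlyOn (fun n (_ : ℝ) => cseq n)
        (fun _ => -Real.eulerMascheroniConstant) atTop (Set.Ioo a b) := by
      rw [Metric.tendstoUniformlyOn_iff]
      intro ε hε
      filter_upwards [Metric.tendsto_nhds.1 tendsto_cseq ε hε] with n hn x _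
      simpa [dist_comm] using hn
    have hsum : TendstoUniformlyOn
        (fun n x => ∑ m ∈ Finset.range (n+1), ((((m:ℝ)+1))⁻¹ - (x+(m:ℝ))⁻¹))
        psiAux atTop (Set.Ioo a b) := (psiAux_unif ha ha1 hb).shift
    have := hconst.add hsum
    apply this.congr
    filter_upwards with n x _
    simp only [Pi.add_apply, cseq, Finset.sum_sub_distrib]
    ring
  · -- HasDerivAt of logGammaSeq
    filter_upwards with n x hxs
    have hsum : HasDerivAt (fun y => ∑ m ∈ Finset.range (n+1), Real.log (y + (m:ℝ)))
        (∑ m ∈ Finset.range (n+1), (x+(m:ℝ))⁻¹) x := by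
      apply HasDerivAt.fun_sum
      intro m _
      have hxm0 : (0:ℝ) < x + (m:ℝ) := lt_of_lt_of_le (by positivity) (key_le ha1 hxs m)
      have h1 : HasDerivAt (fun y : ℝ => y + (m:ℝ)) 1 x := (hasDerivAt_id x).add_const _
      simpa [Function.comp_def] using (Real.hasDerivAt_log (ne_of_gt hxm0)).comp x h1
    have h2 : HasDerivAt (fun y : ℝ => y * Real.log n + Real.log (n.factorial : ℝ)) (Real.log n) x := by
      simpa using ((hasDerivAt_id x).mul_const (Real.log n)).add_const (Real.log (n.factorial : ℝ))
    have heq : (fun y => Real.BohrMollerup.logGammaSeq y n)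
        = fun y => (y * Real.log n + Real.log (n.factorial : ℝ))
            - ∑ m ∈ Finset.range (n+1), Real.log (y+(m:ℝ)) := by
      funext y
      simp [Real.BohrMollerup.logGammaSeq]
    rw [heq]
    exact h2.sub hsum
  · intro x hxs
    exact Real.BohrMollerup.tendsto_log_gamma (lt_trans ha hxs.1)


noncomputable def H1 (x : ℝ) : ℝ := x⁻¹ + psiR x - Real.log (1+x) - x/(1+x)

lemma Hfun_eq {x : ℝ} (hx : 0 < x) :
    Hfun x = Real.log x + Real.log (Real.Gamma x) - x * Real.log (1+x) := by
  have hg : 0 < Real.Gamma x := Real.Gamma_pos_of_pos hx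
  have h1x : (0:ℝ) < 1 + x := by linarith
  rw [Hfun, Real.log_div (by positivity) (by positivity), Real.log_mul (ne_of_gt hx) (ne_of_gt hg),
    Real.log_rpow h1x]

lemma hasDerivAt_Hfun {t : ℝ} (ht : 0 < t) : HasDerivAt Hfun (H1 t) t := by
  have h1t : (0:ℝ) < 1 + t := by linarith
  have hlog : HasDerivAt Real.log t⁻¹ t := Real.hasDerivAt_log (ne_of_gt ht)
  have hlg : HasDerivAt (fun x => Real.log (Real.Gamma x)) (psiR t) t := hasDerivAt_logGamma ht
  have hin : HasDerivAt (fun x : ℝ => 1 + x) 1 t := by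
    simpa using (hasDerivAt_id t).const_add 1
  have hl1 : HasDerivAt (fun x : ℝ => Real.log (1+x)) ((1+t)⁻¹) t := by
    simpa [Function.comp_def] using (Real.hasDerivAt_log (ne_of_gt h1t)).comp t hin
  have hmul : HasDerivAt (fun x : ℝ => x * Real.log (1+x))
      (Real.log (1+t) + t * (1+t)⁻¹) t := by
    simpa [Pi.mul_def] using (hasDerivAt_id t).mul hl1
  have hG : HasDerivAt (fun x => Real.log x + Real.log (Real.Gamma x) - x * Real.log (1+x))
      (t⁻¹ + psiR t - (Real.log (1+t) + t * (1+t)⁻¹)) t := (hlog.add hlg).sub hmul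
  have heq : Hfun =ᶠ[nhds t] fun x => Real.log x + Real.log (Real.Gamma x) - x * Real.log (1+x) := by
    filter_upwards [isOpen_Ioi.mem_nhds (Set.mem_Ioi.2 ht)] with x hx
    exact Hfun_eq hx
  have := hG.congr_of_eventuallyEq heq
  refine this.congr_deriv ?_
  simp only [H1]
  field_simp
  ring

lemma hasDerivAt_H1 {t : ℝ} (ht : 0 < t) :
    HasDerivAt H1 (trig t - 1/t^2 - 1/(1+t)^2 - 1/(1+t)) t := by
  have h1t : (0:ℝ) < 1 + t := by linarith
  have hinv : HasDerivAt (fun x : ℝ => x⁻¹) (-(t^2)⁻¹) t := hasDerivAt_inv (ne_of_gt ht)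
  have hpsi : HasDerivAt psiR (trig t) t := hasDerivAt_psiR ht
  have hin : HasDerivAt (fun x : ℝ => 1 + x) 1 t := by
    simpa using (hasDerivAt_id t).const_add 1
  have hl1 : HasDerivAt (fun x : ℝ => Real.log (1+x)) ((1+t)⁻¹) t := by
    simpa [Function.comp_def] using (Real.hasDerivAt_log (ne_of_gt h1t)).comp t hin
  have hdiv : HasDerivAt (fun x : ℝ => x/(1+x)) ((1*(1+t) - t*1)/(1+t)^2) t :=
    (hasDerivAt_id t).div hin (ne_of_gt h1t)
  have := ((hinv.add hpsi).sub hl1).sub hdiv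
  refine this.congr_deriv ?_
  field_simp
  ring

lemma deriv2_Hfun {t : ℝ} (ht : 0 < t) :
    deriv (deriv Hfun) t = trig t - 1/t^2 - 1/(1+t)^2 - 1/(1+t) := by
  have heq : deriv Hfun =ᶠ[nhds t] H1 := by
    filter_upwards [isOpen_Ioi.mem_nhds (Set.mem_Ioi.2 ht)] with x hx
    exact (hasDerivAt_Hfun hx).deriv
  rw [heq.deriv_eq, (hasDerivAt_H1 ht).deriv]

lemma telescope_hasSum {t : ℝ} (ht : 0 < t) :
    HasSum (fun k : ℕ => ((k:ℝ)+1+t)⁻¹ - ((k:ℝ)+2+t)⁻¹) ((1+t)⁻¹) := by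
  set h : ℕ → ℝ := fun k => ((k:ℝ)+1+t)⁻¹ with hdef
  have hnn : ∀ k : ℕ, 0 ≤ ((k:ℝ)+1+t)⁻¹ - ((k:ℝ)+2+t)⁻¹ := by
    intro k
    have h1 : (0:ℝ) < (k:ℝ)+1+t := by positivity
    have h2 : (0:ℝ) < (k:ℝ)+2+t := by positivity
    have := one_div_le_one_div_of_le h1 (by linarith : (k:ℝ)+1+t ≤ (k:ℝ)+2+t)
    simp only [one_div] at this
    linarith
  rw [hasSum_iff_tendsto_nat_of_nonneg hnn]
  have hps : ∀ n : ℕ, ∑ k ∈ Finset.range n, (((k:ℝ)+1+t)⁻¹ - ((k:ℝ)+2+t)⁻¹) = h 0 - h n := by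
    intro n
    rw [← Finset.sum_range_sub' h n]
    apply Finset.sum_congr rfl
    intro k _
    simp only [hdef]
    push_cast
    ring_nf
  have hlim : Tendsto (fun n : ℕ => h 0 - h n) atTop (𝓝 ((1+t)⁻¹)) := by
    have h0 : h 0 = (1+t)⁻¹ := by simp [hdef]
    have hgrow : Tendsto (fun k : ℕ => ((k:ℝ)+1+t)) atTop atTop :=
      tendsto_atTop_add_const_right _ t
        (tendsto_atTop_add_const_right _ 1 tendsto_natCast_atTop_atTop)
    have htail : Tendsto h atTop (𝓝 0) := tendsto_inv_atTop_zero.comp hgrow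
    rw [show (1+t)⁻¹ = h 0 - 0 by rw [h0]; ring]
    exact tendsto_const_nhds.sub htail
  exact Tendsto.congr (fun n => (hps n).symm) hlim

set_option maxHeartbeats 1000000 in
lemma trig_lt {t : ℝ} (ht : 0 < t) : trig t < 1/t^2 + 1/(1+t)^2 + 1/(1+t) := by
  have hs : Summable (fun k : ℕ => 1 / ((k : ℝ) + t) ^ 2) := trig_summable ht
  have hs1 : Summable (fun k : ℕ => 1 / (((k+1 : ℕ)) + t : ℝ) ^ 2) :=
    (summable_nat_add_iff 1).2 hs
  have hs2 : Summable (fun k : ℕ => 1 / (((k+2 : ℕ)) + t : ℝ) ^ 2) :=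
    (summable_nat_add_iff 2).2 hs
  have e1 : trig t = 1/t^2 + ∑' k : ℕ, 1 / (((k+1 : ℕ)) + t : ℝ) ^ 2 := by
    rw [trig, hs.tsum_eq_zero_add]
    norm_num
  have e2 : (∑' k : ℕ, 1 / (((k+1 : ℕ)) + t : ℝ) ^ 2)
      = 1/(1+t)^2 + ∑' k : ℕ, 1 / (((k+2 : ℕ)) + t : ℝ) ^ 2 := by
    rw [hs1.tsum_eq_zero_add]
    have h1 : (1:ℝ) / (((0+1:ℕ)) + t : ℝ)^2 = 1/(1+t)^2 := by norm_num
    have h2 : (∑' k : ℕ, 1 / (((k+1+1 : ℕ)) + t : ℝ) ^ 2)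
        = ∑' k : ℕ, 1 / (((k+2 : ℕ)) + t : ℝ) ^ 2 :=
      tsum_congr fun k => by norm_num [add_assoc]
    rw [h1, h2]
  have hT := telescope_hasSum ht
  have key : (∑' k : ℕ, 1 / (((k+2 : ℕ)) + t : ℝ) ^ 2) < (1+t)⁻¹ := by
    rw [← hT.tsum_eq]
    apply Summable.tsum_lt_tsum_of_nonneg (i := 0)
    · intro b; positivity
    · intro k
      have h1 : (0:ℝ) < (k:ℝ)+1+t := by positivity
      have h2 : (0:ℝ) < (k:ℝ)+2+t := by positivity
      have e : ((k:ℝ)+1+t)⁻¹ - ((k:ℝ)+2+t)⁻¹ = 1/(((k:ℝ)+1+t)*((k:ℝ)+2+t)) := by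
        field_simp
        norm_num
      rw [e, show ((((k+2:ℕ)):ℝ) + t) = (k:ℝ)+2+t by push_cast; ring]
      gcongr
      nlinarith
    · have h1 : (0:ℝ) < 1+t := by linarith
      have h2 : (0:ℝ) < 2+t := by linarith
      have e : ((0:ℕ):ℝ)+1+t = 1+t := by norm_num
      have e' : ((0:ℕ):ℝ)+2+t = 2+t := by norm_num
      rw [show ((((0:ℕ)+2:ℕ)):ℝ) + t = 2+t by push_cast; ring, e, e']
      rw [show (1+t)⁻¹ - (2+t)⁻¹ = 1/((1+t)*(2+t)) by field_simp; norm_num]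
      rw [one_div, one_div]
      apply inv_strictAnti₀ (by positivity)
      nlinarith
    · exact hT.summable
  rw [e1, e2, one_div (1+t)]
  linarith

end auxiliary

/-- H is strictly concave on (0,∞); in particular
H''(t) = ψ'(t) − 1/t² − 1/(1+t)² − 1/(1+t) < 0 for t > 0, where
ψ'(t) = Σ_{k≥0} 1/(k+t)² is the trigamma function. -/
theorem stmt11 :
    StrictConcaveOn ℝ (Set.Ioi 0) Hfun ∧
      ∀ t : ℝ, 0 < t →
        deriv (deriv Hfun) t
            = (∑' k : ℕ, 1 / ((k : ℝ) + t) ^ 2) - 1 / t ^ 2 - 1 / (1 + t) ^ 2 - 1 / (1 + t)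
          ∧ deriv (deriv Hfun) t < 0 := by
  have hneg : ∀ t : ℝ, 0 < t → deriv (deriv Hfun) t < 0 := by
    intro t ht
    rw [deriv2_Hfun ht]
    have := trig_lt ht
    linarith
  refine ⟨?_, fun t ht => ⟨by rw [deriv2_Hfun ht, trig], hneg t ht⟩⟩
  apply strictConcaveOn_of_deriv2_neg (convex_Ioi 0)
  · intro x hx
    exact (hasDerivAt_Hfun hx).continuousAt.continuousWithinAt
  · intro x hx
    rw [interior_Ioi] at hx
    exact hneg x hx
end

section
/- Let s_n be random variables in [0,1] with s_n → s in probability, and let η₁, η₂, … be i.i.d. [0,1]-valued random variables with distribution function F that is continuous and strictly increasing on [0,1]. Let F_n be the empirical distribution function of η₁,…,η_n, and define the generalized inverse F*(u) = inf{x : F(x) ≥ u}. Then F_n*(s_n) → F*(s) in probability as n → ∞. -/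
open MeasureTheory ProbabilityTheory Filter

/-- Empirical distribution function of η₀,…,η_{n-1} evaluated at x. -/
noncomputable def empCDF {Ω : Type*} (η : ℕ → Ω → ℝ) (n : ℕ) (ω : Ω) (x : ℝ) : ℝ :=
  ((Finset.range n).filter (fun i => η i ω ≤ x)).card / n

/-- Generalized inverse F*(u) = inf {x : F(x) ≥ u}. -/
noncomputable def genInv (F : ℝ → ℝ) (u : ℝ) : ℝ := sInf {x : ℝ | u ≤ F x}

lemma genInv_nonneg {G : ℝ → ℝ} (hG : ∀ y, y < 0 → G y = 0) {u : ℝ} (hu : 0 ≤ u) :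
    0 ≤ genInv G u := by
  rcases hu.eq_or_lt with h | h
  · have hnb : ¬ BddBelow {x : ℝ | u ≤ G x} := by
      rintro ⟨b, hb⟩
      have hmem : min b 0 - 1 ∈ {x : ℝ | u ≤ G x} := by
        have hlt : min b 0 - 1 < 0 := by
          have := min_le_right b (0:ℝ); linarith
        simp only [Set.mem_setOf_eq, hG _ hlt, ← h, le_refl]
      have h1 := hb hmem
      have h2 := min_le_left b (0:ℝ); linarith
    rw [genInv, Real.sInf_of_not_bddBelow hnb]
  · by_cases hne : {x : ℝ | u ≤ G x}.Nonempty
    · refine le_csInf hne fun y hy => ?_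
      by_contra hy0
      push_neg at hy0
      rw [Set.mem_setOf_eq, hG y hy0] at hy
      linarith
    · rw [Set.not_nonempty_iff_eq_empty] at hne
      rw [genInv, hne, Real.sInf_empty]

lemma genInv_le {G : ℝ → ℝ} {u c : ℝ} (hc0 : 0 ≤ c) (hc : u ≤ G c) : genInv G u ≤ c := by
  by_cases hb : BddBelow {x : ℝ | u ≤ G x}
  · exact csInf_le hb hc
  · rw [genInv, Real.sInf_of_not_bddBelow hb]; exact hc0

lemma le_of_genInv_lt {G : ℝ → ℝ} (hmono : Monotone G) (hG : ∀ y, y < 0 → G y = 0)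
    {u a : ℝ} (hu : 0 ≤ u) (h1 : u ≤ G 1) (ha : genInv G u < a) : u ≤ G a := by
  rcases hu.eq_or_lt with h | h
  · rw [← h]
    by_cases ha0 : a < 0
    · rw [hG a ha0]
    · push_neg at ha0
      have hm : G (-1) ≤ G a := hmono (by linarith)
      rw [hG (-1) (by norm_num)] at hm
      exact hm
  · have hne : (1:ℝ) ∈ {x : ℝ | u ≤ G x} := h1
    obtain ⟨y, hy, hya⟩ := exists_lt_of_csInf_lt ⟨1, hne⟩ ha
    exact le_trans hy (hmono hya.le)

lemma genInv_zero_of {F : ℝ → ℝ} (hFnn : ∀ x, 0 ≤ F x) : genInv F 0 = 0 := by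
  have huniv : {x : ℝ | (0:ℝ) ≤ F x} = Set.univ := Set.eq_univ_of_forall hFnn
  have hnb : ¬ BddBelow {x : ℝ | (0:ℝ) ≤ F x} := by
    rw [huniv]
    rintro ⟨b, hb⟩
    have := hb (Set.mem_univ (b - 1))
    linarith
  rw [genInv, Real.sInf_of_not_bddBelow hnb]

lemma wlln {Ω : Type*} [MeasureSpace Ω] [IsProbabilityMeasure (ℙ : Measure Ω)]
    (η : ℕ → Ω → ℝ) (hmeas : ∀ i, Measurable (η i))
    (hind : iIndepFun η ℙ)
    (hident : ∀ i, Measure.map (η i) ℙ = Measure.map (η 0) ℙ)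
    (x : ℝ) :
    ∀ ε > 0, Tendsto
      (fun n => ℙ {ω | ε ≤ |empCDF η n ω x - (ℙ {ω | η 0 ω ≤ x}).toReal|})
      atTop (nhds 0) := by
  set X : ℕ → Ω → ℝ := fun i ω => if η i ω ≤ x then 1 else 0 with hX
  set f : ℝ → ℝ := Set.indicator (Set.Iic x) (fun _ => 1) with hfdef
  have hf : Measurable f := measurable_const.indicator measurableSet_Iic
  have hXf : ∀ i, X i = f ∘ η i := by
    intro i; funext ω
    simp [hX, hfdef, Set.indicator_apply, Set.mem_Iic]
  have hXmeas : ∀ i, Measurable (X i) := fun i => by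
    rw [hXf i]; exact hf.comp (hmeas i)
  have hXind : X 0 = Set.indicator {ω | η 0 ω ≤ x} (fun _ => (1:ℝ)) := by
    funext ω; simp [hX, Set.indicator_apply, Set.mem_setOf_eq]
  have hAmeas : MeasurableSet {ω | η 0 ω ≤ x} := (hmeas 0) measurableSet_Iic
  have hint : Integrable (X 0) ℙ := by
    rw [hXind]; exact (integrable_const (1:ℝ)).indicator hAmeas
  have hindep : Pairwise (Function.onFun (IndepFun · · ℙ) X) := by
    intro i j hij
    have := (hind.indepFun hij).comp hf hf
    simpa [Function.onFun, hXf i, hXf j] using this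
  have hidt : ∀ i, IdentDistrib (X i) (X 0) ℙ ℙ := by
    intro i
    rw [hXf i, hXf 0]
    exact (⟨(hmeas i).aemeasurable, (hmeas 0).aemeasurable, hident i⟩ :
      IdentDistrib (η i) (η 0) ℙ ℙ).comp hf
  have hexp : ℙ[X 0] = (ℙ {ω | η 0 ω ≤ x}).toReal := by
    rw [hXind, integral_indicator_const (1:ℝ) hAmeas, smul_eq_mul, mul_one, measureReal_def]
  have hae := strong_law_ae_real X hint hindep hidt
  rw [hexp] at hae
  have hemp : ∀ n ω, empCDF η n ω x = (∑ i ∈ Finset.range n, X i ω) / n := by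
    intro n ω
    rw [empCDF, hX]
    simp [Finset.sum_boole]
  have hae' : ∀ᵐ ω ∂ℙ, Tendsto (fun n : ℕ => empCDF η n ω x) atTop
      (nhds ((ℙ {ω | η 0 ω ≤ x}).toReal)) := by
    filter_upwards [hae] with ω hω
    simpa [hemp] using hω
  have htm : TendstoInMeasure ℙ (fun n ω => empCDF η n ω x) atTop
      (fun _ => (ℙ {ω | η 0 ω ≤ x}).toReal) := by
    refine tendstoInMeasure_of_tendsto_ae (fun n => ?_) hae'
    have hm : Measurable fun ω => empCDF η n ω x := by
      have hsum : Measurable fun ω => ∑ i ∈ Finset.range n, X i ω :=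
        Finset.measurable_sum _ fun i _ => hXmeas i
      have := hsum.div_const (n : ℝ)
      simpa [hemp] using this
    exact hm.aestronglyMeasurable
  intro ε hε
  have := tendstoInMeasure_iff_dist.mp htm ε hε
  simpa [Real.dist_eq] using this

/-- If s_n → s in probability, η_i are i.i.d. [0,1]-valued with distribution function F
continuous and strictly increasing on [0,1], and F_n is the empirical distribution
function, then F_n*(s_n) → F*(s) in probability. -/
theorem stmt14 {Ω : Type*} [MeasureSpace Ω] [IsProbabilityMeasure (ℙ : Measure Ω)]
    (η : ℕ → Ω → ℝ) (s : ℕ → Ω → ℝ) (slim : ℝ)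
    (hmeas : ∀ i, Measurable (η i)) (hsmeas : ∀ n, Measurable (s n))
    (hval : ∀ i ω, η i ω ∈ Set.Icc (0:ℝ) 1) (hsval : ∀ n ω, s n ω ∈ Set.Icc (0:ℝ) 1)
    (hslim : slim ∈ Set.Icc (0:ℝ) 1)
    (hind : iIndepFun η ℙ)
    (hident : ∀ i, Measure.map (η i) ℙ = Measure.map (η 0) ℙ)
    (F : ℝ → ℝ) (hF : ∀ x, F x = (ℙ {ω | η 0 ω ≤ x}).toReal)
    (hFcont : ContinuousOn F (Set.Icc 0 1)) (hFmono : StrictMonoOn F (Set.Icc 0 1))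
    (hs : ∀ δ > 0, Tendsto (fun n => ℙ {ω | δ < |s n ω - slim|}) atTop (nhds 0)) :
    ∀ δ > 0,
      Tendsto (fun n => ℙ {ω | δ < |genInv (empCDF η n ω) (s n ω) - genInv F slim|})
        atTop (nhds 0) := by
  intro δ hδ
  set q := genInv F slim with hqdef
  have hFnn : ∀ x, 0 ≤ F x := fun x => by rw [hF]; exact ENNReal.toReal_nonneg
  have hFneg : ∀ y, y < 0 → F y = 0 := by
    intro y hy
    rw [hF]
    have hempty : {ω | η 0 ω ≤ y} = ∅ := by
      ext ω
      simp only [Set.mem_setOf_eq, Set.mem_empty_iff_false, iff_false, not_le]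
      have := (hval 0 ω).1; linarith
    rw [hempty, measure_empty]; simp
  have hF1 : F 1 = 1 := by
    rw [hF]
    have huniv : {ω | η 0 ω ≤ 1} = Set.univ := by
      ext ω
      simp only [Set.mem_setOf_eq, Set.mem_univ, iff_true]
      exact (hval 0 ω).2
    rw [huniv, measure_univ]; simp
  have h1S : (1:ℝ) ∈ {x : ℝ | slim ≤ F x} := by
    rw [Set.mem_setOf_eq, hF1]; exact hslim.2
  have hq0 : 0 ≤ q := genInv_nonneg hFneg hslim.1
  have hq1 : q ≤ 1 := genInv_le zero_le_one h1S
  have hempneg : ∀ n ω y, y < 0 → empCDF η n ω y = 0 := by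
    intro n ω y hy
    rw [empCDF]
    have hempty : (Finset.range n).filter (fun i => η i ω ≤ y) = ∅ := by
      refine Finset.filter_eq_empty_iff.2 fun i _ => ?_
      have := (hval i ω).1
      intro hc; linarith
    rw [hempty]; simp
  have hempmono : ∀ n ω, Monotone (empCDF η n ω) := by
    intro n ω a b hab
    rw [empCDF, empCDF]
    have hsubset : ((Finset.range n).filter fun i => η i ω ≤ a) ⊆
        ((Finset.range n).filter fun i => η i ω ≤ b) :=
      Finset.monotone_filter_right _ fun i _ hia => le_trans hia hab
    have hcard : (((Finset.range n).filter (fun i => η i ω ≤ a)).card : ℝ) ≤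
        ((Finset.range n).filter (fun i => η i ω ≤ b)).card :=
      Nat.cast_le.2 (Finset.card_le_card hsubset)
    have hn0 : (0:ℝ) ≤ (n : ℝ) := Nat.cast_nonneg n
    rcases hn0.eq_or_lt with h | h
    · rw [← h]; simp
    · exact (div_le_div_iff_of_pos_right h).2 hcard
  have hemp1 : ∀ n, 1 ≤ n → ∀ ω, empCDF η n ω 1 = 1 := by
    intro n hn ω
    rw [empCDF]
    have hall : (Finset.range n).filter (fun i => η i ω ≤ 1) = Finset.range n :=
      Finset.filter_true_of_mem fun i _ => (hval i ω).2
    rw [hall, Finset.card_range]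
    exact div_self (Nat.cast_ne_zero.2 (by omega))
  have hGnn : ∀ n ω, 0 ≤ genInv (empCDF η n ω) (s n ω) :=
    fun n ω => genInv_nonneg (hempneg n ω) (hsval n ω).1
  have hG1 : ∀ n, 1 ≤ n → ∀ ω, genInv (empCDF η n ω) (s n ω) ≤ 1 := fun n hn ω =>
    genInv_le zero_le_one (by rw [hemp1 n hn ω]; exact (hsval n ω).2)
  have hw' : ∀ x, ∀ ε > 0, Tendsto
      (fun n => ℙ {ω | ε ≤ |empCDF η n ω x - F x|}) atTop (nhds 0) := by
    intro x ε hε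
    have := wlln η hmeas hind hident x ε hε
    rw [hF x]
    exact this
  -- Side 1 : overshooting
  have side1 : Tendsto (fun n => ℙ {ω | δ < genInv (empCDF η n ω) (s n ω) - q})
      atTop (nhds 0) := by
    rcases lt_or_ge (q + δ) 1 with hb | hb
    · have hbmem : q + δ ∈ Set.Icc (0:ℝ) 1 := ⟨by linarith, hb.le⟩
      have hslt : slim < F (q + δ) := by
        rcases hslim.1.eq_or_lt with h0 | h0
        · rw [← h0]
          exact lt_of_le_of_lt (hFnn q) (hFmono ⟨hq0, hq1⟩ hbmem (by linarith))
        · have hSsub : ∀ y ∈ {x : ℝ | slim ≤ F x}, (0:ℝ) ≤ y := by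
            intro y hy
            by_contra hneg
            push_neg at hneg
            rw [Set.mem_setOf_eq, hFneg y hneg] at hy
            linarith
          have hlt : genInv F slim < q + δ/2 := by rw [← hqdef]; linarith
          obtain ⟨y, hy, hylt⟩ := exists_lt_of_csInf_lt ⟨1, h1S⟩ hlt
          have hy'mem : min y 1 ∈ Set.Icc (0:ℝ) 1 :=
            ⟨le_min (hSsub y hy) zero_le_one, min_le_right _ _⟩
          have hFy' : slim ≤ F (min y 1) := by
            rcases le_total y 1 with h | h
            · rwa [min_eq_left h]
            · rw [min_eq_right h, hF1]; exact hslim.2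
          have hylt' : min y 1 < q + δ :=
            lt_of_le_of_lt (min_le_left _ _) (by linarith)
          exact lt_of_le_of_lt hFy' (hFmono hy'mem hbmem hylt')
      set ε := (F (q + δ) - slim)/2 with hεdef
      have hε : 0 < ε := by rw [hεdef]; linarith
      have hsub : ∀ n, 1 ≤ n → {ω | δ < genInv (empCDF η n ω) (s n ω) - q} ⊆
          {ω | ε < |s n ω - slim|} ∪ {ω | ε ≤ |empCDF η n ω (q+δ) - F (q+δ)|} := by
        intro n hn ω hω
        rw [Set.mem_setOf_eq] at hω
        by_contra hcon
        simp only [Set.mem_union, Set.mem_setOf_eq, not_or, not_lt, not_le] at hcon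
        obtain ⟨h1', h2'⟩ := hcon
        have habs1 := abs_le.mp h1'
        have habs2 := abs_lt.mp h2'
        have hle : s n ω ≤ empCDF η n ω (q+δ) := by
          have e1 := habs1.2
          have e2 := habs2.1
          rw [hεdef] at e1 e2
          linarith
        have := genInv_le (by linarith : (0:ℝ) ≤ q + δ) hle
        linarith
      have hlim : Tendsto (fun n => ℙ {ω | ε < |s n ω - slim|}
          + ℙ {ω | ε ≤ |empCDF η n ω (q+δ) - F (q+δ)|}) atTop (nhds 0) := by
        have := (hs ε hε).add (hw' (q+δ) ε hε)
        simpa using this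
      refine tendsto_of_tendsto_of_tendsto_of_le_of_le' tendsto_const_nhds hlim
        (Eventually.of_forall fun n => zero_le) ?_
      filter_upwards [eventually_ge_atTop 1] with n hn
      exact le_trans (measure_mono (hsub n hn)) (measure_union_le _ _)
    · refine Tendsto.congr' ?_ tendsto_const_nhds
      filter_upwards [eventually_ge_atTop 1] with n hn
      have hempty : {ω | δ < genInv (empCDF η n ω) (s n ω) - q} = ∅ := by
        ext ω
        simp only [Set.mem_setOf_eq, Set.mem_empty_iff_false, iff_false, not_lt]
        have := hG1 n hn ω; linarith
      rw [hempty, measure_empty]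
  -- Side 2 : undershooting
  have side2 : Tendsto (fun n => ℙ {ω | δ < q - genInv (empCDF η n ω) (s n ω)})
      atTop (nhds 0) := by
    rcases lt_or_ge δ q with ha | ha
    · have hslim0 : 0 < slim := by
        rcases hslim.1.eq_or_lt with h0 | h0
        · exfalso
          have : q = 0 := by rw [hqdef, ← h0, genInv_zero_of hFnn]
          linarith
        · exact h0
      have hbdd : BddBelow {x : ℝ | slim ≤ F x} := by
        refine ⟨0, fun y hy => ?_⟩
        by_contra hneg
        push_neg at hneg
        rw [Set.mem_setOf_eq, hFneg y hneg] at hy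
        linarith
      have hFa : F (q - δ) < slim := by
        by_contra hge
        push_neg at hge
        have hmem : (q - δ) ∈ {x : ℝ | slim ≤ F x} := hge
        have hle : genInv F slim ≤ q - δ := csInf_le hbdd hmem
        rw [← hqdef] at hle
        linarith
      set ε := (slim - F (q - δ))/2 with hεdef
      have hε : 0 < ε := by rw [hεdef]; linarith
      have hsub : ∀ n, 1 ≤ n → {ω | δ < q - genInv (empCDF η n ω) (s n ω)} ⊆
          {ω | ε < |s n ω - slim|} ∪ {ω | ε ≤ |empCDF η n ω (q-δ) - F (q-δ)|} := by
        intro n hn ω hω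
        rw [Set.mem_setOf_eq] at hω
        by_contra hcon
        simp only [Set.mem_union, Set.mem_setOf_eq, not_or, not_lt, not_le] at hcon
        obtain ⟨h1', h2'⟩ := hcon
        have habs1 := abs_le.mp h1'
        have habs2 := abs_lt.mp h2'
        have hlt : genInv (empCDF η n ω) (s n ω) < q - δ := by linarith
        have hkey : s n ω ≤ empCDF η n ω (q - δ) :=
          le_of_genInv_lt (hempmono n ω) (hempneg n ω) (hsval n ω).1
            (by rw [hemp1 n hn ω]; exact (hsval n ω).2) hlt
        have e1 := habs1.1
        have e2 := habs2.2
        rw [hεdef] at e1 e2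
        linarith
      have hlim : Tendsto (fun n => ℙ {ω | ε < |s n ω - slim|}
          + ℙ {ω | ε ≤ |empCDF η n ω (q-δ) - F (q-δ)|}) atTop (nhds 0) := by
        have := (hs ε hε).add (hw' (q-δ) ε hε)
        simpa using this
      refine tendsto_of_tendsto_of_tendsto_of_le_of_le' tendsto_const_nhds hlim
        (Eventually.of_forall fun n => zero_le) ?_
      filter_upwards [eventually_ge_atTop 1] with n hn
      exact le_trans (measure_mono (hsub n hn)) (measure_union_le _ _)
    · have hempty : ∀ n, {ω | δ < q - genInv (empCDF η n ω) (s n ω)} = ∅ := by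
        intro n
        ext ω
        simp only [Set.mem_setOf_eq, Set.mem_empty_iff_false, iff_false, not_lt]
        have := hGnn n ω; linarith
      simp only [hempty, measure_empty]
      exact tendsto_const_nhds
  -- Combine the two sides
  have hsub : ∀ n, {ω | δ < |genInv (empCDF η n ω) (s n ω) - q|} ⊆
      {ω | δ < genInv (empCDF η n ω) (s n ω) - q}
      ∪ {ω | δ < q - genInv (empCDF η n ω) (s n ω)} := by
    intro n ω hω
    rw [Set.mem_setOf_eq, lt_abs] at hω
    rcases hω with h | h
    · exact Or.inl h
    · exact Or.inr (by rw [Set.mem_setOf_eq]; linarith)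
  refine tendsto_of_tendsto_of_tendsto_of_le_of_le' tendsto_const_nhds ?_
    (Eventually.of_forall fun n => zero_le)
    (Eventually.of_forall fun n =>
      le_trans (measure_mono (hsub n)) (measure_union_le _ _))
  simpa using side1.add side2
end

section
/- Let g : [0,1]^K → [0,∞) be continuous, Γ_u = {x ∈ [0,1]^K : g(x) ≥ u}, and suppose h(u) := Leb(Γ_u) is continuous and strictly decreasing onto [0,1] as u ranges over [0, sup g]. Define G(A) = ∫_A g dx and D_t = Γ_{h*(t)} with h*(t) = inf{u ≥ 0 : h(u) ≤ t}. Then the function t ↦ G(D_t) is strictly concave on [0,1]: for 0 ≤ t₁ < t₂ < t₃ ≤ 1, (G(D_{t₂}) − G(D_{t₁}))/(t₂ − t₁) > (G(D_{t₃}) − G(D_{t₂}))/(t₃ − t₂). -/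
open MeasureTheory

/-- The unit cube [0,1]^K. -/
def unitCube (K : ℕ) : Set (Fin K → ℝ) := {x | ∀ k, x k ∈ Set.Icc (0:ℝ) 1}

/-- Γ_u = {x ∈ [0,1]^K : g(x) ≥ u}. -/
def upperSet {K : ℕ} (g : (Fin K → ℝ) → ℝ) (u : ℝ) : Set (Fin K → ℝ) :=
  {x ∈ unitCube K | u ≤ g x}

lemma unitCube_eq (K : ℕ) :
    unitCube K = Set.pi Set.univ (fun _ : Fin K => Set.Icc (0:ℝ) 1) := by
  ext x
  simp only [unitCube, Set.mem_setOf_eq, Set.mem_univ_pi, Set.mem_Icc]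

lemma unitCube_closed (K : ℕ) : IsClosed (unitCube K) := by
  rw [unitCube_eq]; exact isClosed_set_pi (fun i _ => isClosed_Icc)

lemma unitCube_compact (K : ℕ) : IsCompact (unitCube K) := by
  rw [unitCube_eq]; exact isCompact_univ_pi (fun i => isCompact_Icc)

lemma upperSet_closed {K : ℕ} {g : (Fin K → ℝ) → ℝ}
    (hgc : ContinuousOn g (unitCube K)) (u : ℝ) : IsClosed (upperSet g u) := by
  have : upperSet g u = unitCube K ∩ g ⁻¹' Set.Ici u := rfl
  rw [this]
  exact hgc.preimage_isClosed_of_isClosed (unitCube_closed K) isClosed_Ici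

lemma upperSet_subset {K : ℕ} (g : (Fin K → ℝ) → ℝ) (u : ℝ) :
    upperSet g u ⊆ unitCube K := fun x hx => hx.1

lemma upperSet_anti {K : ℕ} (g : (Fin K → ℝ) → ℝ) {u v : ℝ} (huv : u ≤ v) :
    upperSet g v ⊆ upperSet g u := fun x hx => ⟨hx.1, le_trans huv hx.2⟩

/-- Let g ≥ 0 be continuous on [0,1]^K, h(u) = Leb(Γ_u) continuous and strictly
decreasing onto [0,1] for u ∈ [0, sup g], h*(t) = inf{u ≥ 0 : h(u) ≤ t},
D_t = Γ_{h*(t)} and G(A) = ∫_A g.  Then t ↦ G(D_t) is strictly concave on [0,1]: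
for 0 ≤ t₁ < t₂ < t₃ ≤ 1 the difference quotients strictly decrease. -/
theorem stmt15 (K : ℕ) (g : (Fin K → ℝ) → ℝ)
    (hgc : ContinuousOn g (unitCube K)) (hg0 : ∀ x ∈ unitCube K, 0 ≤ g x)
    (M : ℝ) (hM : M = sSup (g '' unitCube K))
    (h : ℝ → ℝ) (hh : ∀ u, h u = (volume (upperSet g u)).toReal)
    (hhcont : ContinuousOn h (Set.Icc 0 M))
    (hhanti : StrictAntiOn h (Set.Icc 0 M))
    (hhonto : h '' Set.Icc 0 M = Set.Icc 0 1)
    (t₁ t₂ t₃ : ℝ) (h0 : 0 ≤ t₁) (h12 : t₁ < t₂) (h23 : t₂ < t₃) (h1 : t₃ ≤ 1) :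
    ((∫ x in upperSet g (sInf {u : ℝ | 0 ≤ u ∧ h u ≤ t₃}), g x)
        - ∫ x in upperSet g (sInf {u : ℝ | 0 ≤ u ∧ h u ≤ t₂}), g x) / (t₃ - t₂)
      < ((∫ x in upperSet g (sInf {u : ℝ | 0 ≤ u ∧ h u ≤ t₂}), g x)
        - ∫ x in upperSet g (sInf {u : ℝ | 0 ≤ u ∧ h u ≤ t₁}), g x) / (t₂ - t₁) := by
  -- finiteness of measures of upper sets
  have hfin : ∀ u : ℝ, volume (upperSet g u) < ⊤ := fun u =>
    lt_of_le_of_lt (measure_mono (upperSet_subset g u)) (unitCube_compact K).measure_lt_top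
  -- key: characterization of h* t for t ∈ [0,1]
  have key : ∀ t ∈ Set.Icc (0:ℝ) 1, ∃ u ∈ Set.Icc 0 M,
      h u = t ∧ sInf {v : ℝ | 0 ≤ v ∧ h v ≤ t} = u := by
    intro t ht
    rw [← hhonto] at ht
    obtain ⟨u, huM, hut⟩ := ht
    refine ⟨u, huM, hut, ?_⟩
    have huS : u ∈ {v : ℝ | 0 ≤ v ∧ h v ≤ t} := ⟨huM.1, le_of_eq hut⟩
    refine le_antisymm (csInf_le ⟨0, fun v hv => hv.1⟩ huS) (le_csInf ⟨u, huS⟩ ?_)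
    intro v hv
    by_contra hlt
    push_neg at hlt
    have hvM : v ∈ Set.Icc 0 M := ⟨hv.1, le_trans hlt.le huM.2⟩
    have := hhanti hvM huM hlt
    rw [hut] at this
    exact absurd hv.2 (not_le.mpr this)
  have ht1 : t₁ ∈ Set.Icc (0:ℝ) 1 := ⟨h0, le_trans (le_trans h12.le h23.le) h1⟩
  have ht2 : t₂ ∈ Set.Icc (0:ℝ) 1 := ⟨le_trans h0 h12.le, le_trans h23.le h1⟩
  have ht3 : t₃ ∈ Set.Icc (0:ℝ) 1 := ⟨le_trans (le_trans h0 h12.le) h23.le, h1⟩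
  obtain ⟨u₁, hu₁M, hu₁t, hs₁⟩ := key t₁ ht1
  obtain ⟨u₂, hu₂M, hu₂t, hs₂⟩ := key t₂ ht2
  obtain ⟨u₃, hu₃M, hu₃t, hs₃⟩ := key t₃ ht3
  rw [hs₁, hs₂, hs₃]
  -- ordering of the u's
  have hord : ∀ {a b : ℝ} (ha : a ∈ Set.Icc 0 M) (hb : b ∈ Set.Icc 0 M),
      h a < h b → b < a := by
    intro a b ha hb hab
    by_contra hle
    push_neg at hle
    rcases eq_or_lt_of_le hle with heq | hlt
    · rw [heq] at hab; exact lt_irrefl _ hab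
    · exact absurd hab (not_lt.mpr (hhanti ha hb hlt).le)
  have h21 : u₂ < u₁ := hord hu₁M hu₂M (by rw [hu₁t, hu₂t]; exact h12)
  have h32 : u₃ < u₂ := hord hu₂M hu₃M (by rw [hu₂t, hu₃t]; exact h23)
  -- sets
  set Γ₁ := upperSet g u₁ with hΓ₁
  set Γ₂ := upperSet g u₂ with hΓ₂
  set Γ₃ := upperSet g u₃ with hΓ₃
  have hsub12 : Γ₁ ⊆ Γ₂ := upperSet_anti g h21.le
  have hsub23 : Γ₂ ⊆ Γ₃ := upperSet_anti g h32.le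
  have hmeas : ∀ u : ℝ, MeasurableSet (upperSet g u) := fun u =>
    (upperSet_closed hgc u).measurableSet
  have hint : IntegrableOn g (unitCube K) := hgc.integrableOn_compact (unitCube_compact K)
  have hintΓ : ∀ u : ℝ, IntegrableOn g (upperSet g u) := fun u =>
    hint.mono_set (upperSet_subset g u)
  -- measure of difference sets
  have hdiffvol : ∀ {a b : ℝ}, a ≤ b →
      (volume (upperSet g a \ upperSet g b)).toReal = h a - h b := by
    intro a b hab
    have hsub := upperSet_anti g hab
    rw [measure_diff hsub (hmeas b).nullMeasurableSet (hfin b).ne,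
      ENNReal.toReal_sub_of_le (measure_mono hsub) (hfin a).ne, hh a, hh b]
  have hm32 : (volume (Γ₃ \ Γ₂)).toReal = t₃ - t₂ := by
    rw [hdiffvol h32.le, hu₂t, hu₃t]
  have hm21 : (volume (Γ₂ \ Γ₁)).toReal = t₂ - t₁ := by
    rw [hdiffvol h21.le, hu₁t, hu₂t]
  -- integral splitting
  have hI32 : ∫ x in Γ₃ \ Γ₂, g x = (∫ x in Γ₃, g x) - ∫ x in Γ₂, g x :=
    integral_diff (hmeas u₂) (hintΓ u₃) hsub23
  have hI21 : ∫ x in Γ₂ \ Γ₁, g x = (∫ x in Γ₂, g x) - ∫ x in Γ₁, g x :=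
    integral_diff (hmeas u₁) (hintΓ u₂) hsub12
  have hmeas32 : MeasurableSet (Γ₃ \ Γ₂) := (hmeas u₃).diff (hmeas u₂)
  have hmeas21 : MeasurableSet (Γ₂ \ Γ₁) := (hmeas u₂).diff (hmeas u₁)
  have hfin32 : volume (Γ₃ \ Γ₂) < ⊤ :=
    lt_of_le_of_lt (measure_mono Set.diff_subset) (hfin u₃)
  have hfin21 : volume (Γ₂ \ Γ₁) < ⊤ :=
    lt_of_le_of_lt (measure_mono Set.diff_subset) (hfin u₂)
  have hg32 : IntegrableOn g (Γ₃ \ Γ₂) := (hintΓ u₃).mono_set Set.diff_subset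
  have hg21 : IntegrableOn g (Γ₂ \ Γ₁) := (hintΓ u₂).mono_set Set.diff_subset
  -- pointwise bounds
  have hlt32 : ∀ x ∈ Γ₃ \ Γ₂, g x < u₂ := by
    intro x hx
    by_contra hle
    push_neg at hle
    exact hx.2 ⟨hx.1.1, hle⟩
  have hge21 : ∀ x ∈ Γ₂ \ Γ₁, u₂ ≤ g x := fun x hx => hx.1.2
  -- the set Γ₃ \ Γ₂ has positive measure
  have hpos32 : 0 < volume (Γ₃ \ Γ₂) := by
    rcases eq_or_lt_of_le (zero_le : (0:ENNReal) ≤ volume (Γ₃ \ Γ₂)) with heq | hlt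
    · exfalso
      have : (volume (Γ₃ \ Γ₂)).toReal = 0 := by rw [← heq]; simp
      rw [hm32] at this
      linarith
    · exact hlt
  -- strict upper bound : ∫_{Γ₃ \ Γ₂} g < u₂ * (t₃ - t₂)
  have hupper : ∫ x in Γ₃ \ Γ₂, g x < u₂ * (t₃ - t₂) := by
    have hconst : IntegrableOn (fun _ : Fin K → ℝ => u₂) (Γ₃ \ Γ₂) :=
      integrableOn_const hfin32.ne
    have hsubint : Integrable (fun x => u₂ - g x) ((volume : Measure (Fin K → ℝ)).restrict (Γ₃ \ Γ₂)) :=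
      hconst.sub hg32
    have hnn : 0 ≤ᵐ[(volume : Measure (Fin K → ℝ)).restrict (Γ₃ \ Γ₂)] fun x => u₂ - g x := by
      refine (ae_restrict_iff' hmeas32).2 (Filter.Eventually.of_forall ?_)
      intro x hx
      exact sub_nonneg.2 (hlt32 x hx).le
    have hpos : 0 < ∫ x in Γ₃ \ Γ₂, (u₂ - g x) := by
      rw [setIntegral_pos_iff_support_of_nonneg_ae hnn hsubint]
      refine lt_of_lt_of_le hpos32 (measure_mono ?_)
      intro x hx
      exact ⟨sub_ne_zero.2 (ne_of_gt (hlt32 x hx)), hx⟩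
    have hsplit : ∫ x in Γ₃ \ Γ₂, (u₂ - g x)
        = (volume (Γ₃ \ Γ₂)).toReal * u₂ - ∫ x in Γ₃ \ Γ₂, g x := by
      rw [integral_sub hconst hg32, setIntegral_const, smul_eq_mul, Measure.real]
    rw [hsplit, hm32] at hpos
    nlinarith
  -- lower bound : u₂ * (t₂ - t₁) ≤ ∫_{Γ₂ \ Γ₁} g
  have hlower : u₂ * (t₂ - t₁) ≤ ∫ x in Γ₂ \ Γ₁, g x := by
    have hconst : IntegrableOn (fun _ : Fin K → ℝ => u₂) (Γ₂ \ Γ₁) :=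
      integrableOn_const hfin21.ne
    have := setIntegral_mono_on hconst hg21 hmeas21 hge21
    rwa [setIntegral_const, smul_eq_mul, Measure.real, hm21, mul_comm] at this
  -- conclude
  have hd32 : (0:ℝ) < t₃ - t₂ := sub_pos.2 h23
  have hd21 : (0:ℝ) < t₂ - t₁ := sub_pos.2 h12
  rw [← hI32, ← hI21]
  calc (∫ x in Γ₃ \ Γ₂, g x) / (t₃ - t₂) < u₂ := by
        rw [div_lt_iff₀ hd32]; linarith [hupper]
    _ ≤ (∫ x in Γ₂ \ Γ₁, g x) / (t₂ - t₁) := by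
        rw [le_div_iff₀ hd21]; linarith [hlower]
end

section
/- Let F₀ be a distribution on ℝ with continuous density f₀ and let f be another continuous density with support contained in supp(f₀), such that r(x) = f(x)/f₀(x) is strictly increasing on supp(f) with limit ρ := lim_{x→∞} r(x) < ∞ and (0,∞) ⊂ supp(f). Let F(x) = ∫_{−∞}^x f. Then sup_x F(x)/F₀(x) < ρ. -/
open MeasureTheory Filter

/-- Let f₀, f be continuous probability densities with {f > 0} ⊆ {f₀ > 0} and
(0,∞) ⊆ {f > 0}, such that r = f/f₀ is strictly increasing on {f > 0} with
finite limit ρ at +∞.  Then sup_x F(x)/F₀(x) < ρ, where F, F₀ are the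
corresponding distribution functions. -/
theorem stmt16 (f₀ f : ℝ → ℝ) (ρ : ℝ)
    (hf₀c : Continuous f₀) (hfc : Continuous f)
    (hf₀0 : ∀ x, 0 ≤ f₀ x) (hf0 : ∀ x, 0 ≤ f x)
    (hf₀int : Integrable f₀) (hfint : Integrable f)
    (hf₀1 : ∫ x, f₀ x = 1) (hf1 : ∫ x, f x = 1)
    (hsupp : {x | 0 < f x} ⊆ {x | 0 < f₀ x})
    (hpos : Set.Ioi (0:ℝ) ⊆ {x | 0 < f x})
    (hmono : StrictMonoOn (fun x => f x / f₀ x) {x | 0 < f x})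
    (hlim : Tendsto (fun x => f x / f₀ x) atTop (nhds ρ)) :
    ∃ L < ρ, ∀ x : ℝ, (∫ t in Set.Iic x, f t) / (∫ t in Set.Iic x, f₀ t) ≤ L := by
  -- r < ρ on {f > 0}
  have hrρ : ∀ t, 0 < f t → f t / f₀ t < ρ := by
    intro t ht
    set y : ℝ := max t 0 + 1 with hy
    have hy0 : (0:ℝ) < y := by positivity
    have hty : t < y := lt_of_le_of_lt (le_max_left t 0) (lt_add_one _)
    have hyf : 0 < f y := hpos hy0
    have h1 : f t / f₀ t < f y / f₀ y := hmono ht hyf hty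
    have h2 : f y / f₀ y ≤ ρ := by
      apply ge_of_tendsto hlim
      filter_upwards [eventually_gt_atTop y] with z hz
      exact (hmono hyf (hpos (hy0.trans hz)) hz).le
    exact h1.trans_le h2
  have hf1pos : 0 < f 1 := hpos (by norm_num)
  have hf₀1pos : 0 < f₀ 1 := hsupp hf1pos
  have hr1pos : 0 < f 1 / f₀ 1 := div_pos hf1pos hf₀1pos
  have hρpos : 0 < ρ := hr1pos.trans (hrρ 1 hf1pos)
  -- pointwise bounds
  have hlt : ∀ t, 0 < f t → f t < ρ * f₀ t := fun t ht =>
    (div_lt_iff₀ (hsupp ht)).mp (hrρ t ht)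
  have hle : ∀ t, f t ≤ ρ * f₀ t := by
    intro t
    rcases lt_or_eq_of_le (hf0 t) with ht | ht
    · exact (hlt t ht).le
    · rw [← ht]; exact mul_nonneg hρpos.le (hf₀0 t)
  have hle1 : ∀ t, t < 1 → f t ≤ (f 1 / f₀ 1) * f₀ t := by
    intro t ht
    rcases lt_or_eq_of_le (hf0 t) with h | h
    · exact le_of_lt ((div_lt_iff₀ (hsupp h)).mp (hmono h hf1pos ht))
    · rw [← h]; exact mul_nonneg hr1pos.le (hf₀0 t)
  -- the gap function g = ρ f₀ - f
  set g : ℝ → ℝ := fun t => ρ * f₀ t - f t with hg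
  have hgint : Integrable g := (hf₀int.const_mul ρ).sub hfint
  have hg0 : ∀ t, 0 ≤ g t := fun t => sub_nonneg.mpr (hle t)
  set G1 : ℝ := ∫ t in Set.Iic (1:ℝ), g t with hG1
  have hG1pos : 0 < G1 := by
    have h01 : (0:ℝ) < ∫ t in (0:ℝ)..1, g t := by
      apply intervalIntegral.intervalIntegral_pos_of_pos_on
        hgint.intervalIntegrable
      · intro t ht
        have htf : 0 < f t := hpos ht.1
        exact sub_pos.mpr (hlt t htf)
      · norm_num
    rw [intervalIntegral.integral_of_le (by norm_num : (0:ℝ) ≤ 1)] at h01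
    refine lt_of_lt_of_le h01 ?_
    apply setIntegral_mono_set hgint.integrableOn
    · exact Eventually.of_forall fun t => hg0 t
    · exact HasSubset.Subset.eventuallyLE Set.Ioc_subset_Iic_self
  -- identities and bounds for the distribution functions
  have hsplit : ∀ x : ℝ, (∫ t in Set.Iic x, g t)
      = ρ * (∫ t in Set.Iic x, f₀ t) - ∫ t in Set.Iic x, f t := by
    intro x
    rw [integral_sub ((hf₀int.const_mul ρ).integrableOn) hfint.integrableOn,
      integral_const_mul]
  have hF₀nonneg : ∀ x : ℝ, 0 ≤ ∫ t in Set.Iic x, f₀ t :=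
    fun x => setIntegral_nonneg measurableSet_Iic fun t _ => hf₀0 t
  have hFnonneg : ∀ x : ℝ, 0 ≤ ∫ t in Set.Iic x, f t :=
    fun x => setIntegral_nonneg measurableSet_Iic fun t _ => hf0 t
  have hF₀le1 : ∀ x : ℝ, (∫ t in Set.Iic x, f₀ t) ≤ 1 := by
    intro x
    rw [← hf₀1]
    exact setIntegral_le_integral hf₀int (Eventually.of_forall fun t => hf₀0 t)
  have hGmono : ∀ x : ℝ, 1 ≤ x → G1 ≤ ∫ t in Set.Iic x, g t := by
    intro x hx
    apply setIntegral_mono_set hgint.integrableOn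
    · exact Eventually.of_forall fun t => hg0 t
    · exact HasSubset.Subset.eventuallyLE (Set.Iic_subset_Iic.mpr hx)
  have hF₀1pos' : 0 < ∫ t in Set.Iic (1:ℝ), f₀ t := by
    by_contra h
    push_neg at h
    have h0 : (∫ t in Set.Iic (1:ℝ), f₀ t) = 0 := le_antisymm h (hF₀nonneg 1)
    have := hsplit 1
    rw [h0] at this
    have hF1 := hFnonneg 1
    rw [← hG1] at this
    linarith
  refine ⟨max (f 1 / f₀ 1) (ρ - G1), ?_, ?_⟩
  · exact max_lt (hrρ 1 hf1pos) (by linarith)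
  · intro x
    rcases lt_or_ge x 1 with hx | hx
    · -- x < 1 : use pointwise bound f ≤ r(1) f₀
      have hFle : (∫ t in Set.Iic x, f t) ≤ (f 1 / f₀ 1) * ∫ t in Set.Iic x, f₀ t := by
        rw [← integral_const_mul]
        apply setIntegral_mono_on hfint.integrableOn
          ((hf₀int.const_mul _).integrableOn) measurableSet_Iic
        intro t ht
        exact hle1 t (lt_of_le_of_lt ht hx)
      rcases lt_or_eq_of_le (hF₀nonneg x) with h | h
      · refine le_trans ?_ (le_max_left _ _)
        rw [div_le_iff₀ h]
        exact hFle
      · have hF0 : (∫ t in Set.Iic x, f t) = 0 := by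
          have := hFnonneg x
          nlinarith [hFle, hr1pos]
        rw [hF0, zero_div]
        exact le_trans hr1pos.le (le_max_left _ _)
    · -- x ≥ 1
      have hF₀pos : 0 < ∫ t in Set.Iic x, f₀ t := by
        refine lt_of_lt_of_le hF₀1pos' ?_
        apply setIntegral_mono_set hf₀int.integrableOn
        · exact Eventually.of_forall fun t => hf₀0 t
        · exact HasSubset.Subset.eventuallyLE (Set.Iic_subset_Iic.mpr hx)
      refine le_trans ?_ (le_max_right _ _)
      rw [div_le_iff₀ hF₀pos]
      have h1 := hGmono x hx
      have h2 := hsplit x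
      have h3 : G1 * (∫ t in Set.Iic x, f₀ t) ≤ G1 :=
        mul_le_of_le_one_right hG1pos.le (hF₀le1 x)
      nlinarith
end

section
/- Let f₀₁, f₀₂ be probability densities on (0,∞) with f₀ₖ(x) ~ x^{−sₖ} as x → ∞ for some s₁ = s₂ = s > 1, and let f₁, f₂ be densities with fₖ(x) ~ ρₖ x^{−s} as x → ∞, where ρ₁, ρ₂ > 0. Then the convolution ratio r(x) = (∫₀^x f₁(t)f₂(x−t) dt)/(∫₀^x f₀₁(t)f₀₂(x−t) dt) satisfies r(x) → (ρ₁ + ρ₂)/2 as x → ∞. -/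
open MeasureTheory Filter Set

lemma rpow_neg_anti {s u v : ℝ} (hs : 0 < s) (hv : 0 < v) (huv : v ≤ u) :
    u ^ (-s) ≤ v ^ (-s) := by
  have hu : 0 < u := hv.trans_le huv
  rw [Real.rpow_neg hu.le, Real.rpow_neg hv.le]
  have h1 : v ^ s ≤ u ^ s := Real.rpow_le_rpow hv.le huv hs.le
  have h2 : 0 < v ^ s := Real.rpow_pos_of_pos hv s
  exact inv_anti₀ h2 h1

lemma asymp_bounds (f : ℝ → ℝ) {s a ε : ℝ} (hε : 0 < ε)
    (hfa : Tendsto (fun x => f x / x ^ (-s)) atTop (nhds a)) :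
    ∃ M : ℝ, 0 < M ∧ ∀ u, M ≤ u → (a - ε) * u ^ (-s) ≤ f u ∧ f u ≤ (a + ε) * u ^ (-s) := by
  have h := (Metric.tendsto_nhds.mp hfa) ε hε
  rw [eventually_atTop] at h
  obtain ⟨N, hN⟩ := h
  refine ⟨max N 1, lt_of_lt_of_le one_pos (le_max_right _ _), fun u hu => ?_⟩
  have hu1 : (1:ℝ) ≤ u := le_trans (le_max_right _ _) hu
  have hu0 : 0 < u := lt_of_lt_of_le one_pos hu1
  have hp : 0 < u ^ (-s) := Real.rpow_pos_of_pos hu0 _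
  have := hN u (le_trans (le_max_left _ _) hu)
  rw [Real.dist_eq, abs_lt] at this
  constructor
  · have : a - ε < f u / u ^ (-s) := by linarith [this.1]
    have := (lt_div_iff₀ hp).mp this
    linarith
  · have : f u / u ^ (-s) < a + ε := by linarith [this.2]
    have := (div_lt_iff₀ hp).mp this
    linarith

lemma tail_one (f : ℝ → ℝ) (hfz : ∀ x ≤ 0, f x = 0) (hfint : Integrable f)
    (hfi : (∫ x, f x) = 1) :
    Tendsto (fun y => ∫ t in Set.Ioc 0 y, f t) atTop (nhds 1) := by
  have hU : (⋃ y : ℝ, Set.Ioc (0:ℝ) y) = Set.Ioi 0 := by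
    ext t
    simp only [Set.mem_iUnion, Set.mem_Ioc, Set.mem_Ioi]
    exact ⟨fun ⟨y, hy⟩ => hy.1, fun h => ⟨t, h, le_refl t⟩⟩
  have h1 : (∫ t in Set.Ioi (0:ℝ), f t) = 1 := by
    rw [setIntegral_eq_integral_of_forall_compl_eq_zero, hfi]
    intro x hx
    exact hfz x (by simpa using hx)
  have := tendsto_setIntegral_of_monotone (μ := volume) (f := f)
    (s := fun y : ℝ => Set.Ioc (0:ℝ) y) (fun y => measurableSet_Ioc)
    (fun y z hyz => Set.Ioc_subset_Ioc_right hyz) (by rw [hU]; exact hfint.integrableOn)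
  rwa [hU, h1] at this

lemma edge_piece (f g : ℝ → ℝ) (hfm : Measurable f) (hgm : Measurable g)
    (hf0 : ∀ x, 0 ≤ f x) (hg0 : ∀ x, 0 ≤ g x) (hfint : Integrable f)
    {s ε b M c x : ℝ} (hs : 0 < s) (hε : 0 ≤ ε)
    (hεb : 0 ≤ b - ε) (hc0 : 0 < c) (hc1 : c < 1)
    (hMx : M ≤ (1 - c) * x) (hM : 0 < M) (hx : 0 < x)
    (hg : ∀ u, M ≤ u → (b - ε) * u ^ (-s) ≤ g u ∧ g u ≤ (b + ε) * u ^ (-s)) :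
    IntegrableOn (fun t => f t * g (x - t)) (Set.Ioc 0 (c * x)) ∧
    (b - ε) * x ^ (-s) * (∫ t in Set.Ioc 0 (c * x), f t) ≤
      (∫ t in Set.Ioc 0 (c * x), f t * g (x - t)) ∧
    (∫ t in Set.Ioc 0 (c * x), f t * g (x - t)) ≤
      (b + ε) * ((1 - c) * x) ^ (-s) * (∫ t in Set.Ioc 0 (c * x), f t) := by
  have h1cx : 0 < (1 - c) * x := lt_of_lt_of_le hM hMx
  have key : ∀ t ∈ Set.Ioc (0:ℝ) (c * x),
      ((b - ε) * x ^ (-s)) * f t ≤ f t * g (x - t) ∧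
      f t * g (x - t) ≤ ((b + ε) * ((1 - c) * x) ^ (-s)) * f t := by
    intro t ht
    have ht1 : 0 < t := ht.1
    have ht2 : t ≤ c * x := ht.2
    have hxt : (1 - c) * x ≤ x - t := by nlinarith
    have hMxt : M ≤ x - t := le_trans hMx hxt
    obtain ⟨hgl, hgu⟩ := hg (x - t) hMxt
    have hxtx : x - t ≤ x := by linarith
    have hr1 : (x - t) ^ (-s) ≤ ((1 - c) * x) ^ (-s) := rpow_neg_anti hs h1cx hxt
    have hr2 : x ^ (-s) ≤ (x - t) ^ (-s) :=
      rpow_neg_anti hs (lt_of_lt_of_le h1cx hxt) hxtx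
    constructor
    · have : (b - ε) * x ^ (-s) ≤ g (x - t) := by nlinarith
      nlinarith [hf0 t]
    · have : g (x - t) ≤ (b + ε) * ((1 - c) * x) ^ (-s) := by nlinarith [hr1, hgu, hεb, hε]
      nlinarith [hf0 t, hg0 (x - t)]
  set C := (b + ε) * ((1 - c) * x) ^ (-s) with hC
  have hCf : IntegrableOn (fun t => C * f t) (Set.Ioc 0 (c * x)) :=
    (hfint.const_mul C).integrableOn
  have hC2f : IntegrableOn (fun t => ((b - ε) * x ^ (-s)) * f t) (Set.Ioc 0 (c * x)) :=
    (hfint.const_mul _).integrableOn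
  have hmeas : AEStronglyMeasurable (fun t => f t * g (x - t))
      (volume.restrict (Set.Ioc 0 (c * x))) :=
    ((hfm.mul (hgm.comp (measurable_const.sub measurable_id))).aestronglyMeasurable)
  have hInt : IntegrableOn (fun t => f t * g (x - t)) (Set.Ioc 0 (c * x)) := by
    refine Integrable.mono' hCf hmeas ?_
    rw [ae_restrict_iff' measurableSet_Ioc]
    filter_upwards with t
    intro ht
    rw [Real.norm_eq_abs, abs_of_nonneg (mul_nonneg (hf0 t) (hg0 _))]
    exact (key t ht).2
  refine ⟨hInt, ?_, ?_⟩
  · have := setIntegral_mono_on hC2f hInt measurableSet_Ioc (fun t ht => (key t ht).1)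
    rwa [MeasureTheory.integral_const_mul] at this
  · have := setIntegral_mono_on hInt hCf measurableSet_Ioc (fun t ht => (key t ht).2)
    rwa [MeasureTheory.integral_const_mul] at this

lemma mid_piece (f g : ℝ → ℝ) (hfm : Measurable f) (hgm : Measurable g)
    (hf0 : ∀ x, 0 ≤ f x) (hg0 : ∀ x, 0 ≤ g x)
    {s A B M c x : ℝ} (hs : 0 < s) (hM : 0 < M) (hc0 : 0 < c) (hc2 : c ≤ 1/2)
    (hMx : M ≤ c * x) (hx : 0 < x) (hA : 0 ≤ A) (hB : 0 ≤ B)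
    (hfb : ∀ u, M ≤ u → f u ≤ A * u ^ (-s))
    (hgb : ∀ u, M ≤ u → g u ≤ B * u ^ (-s)) :
    IntegrableOn (fun t => f t * g (x - t)) (Set.Ioc (c*x) ((1-c)*x)) ∧
    (∫ t in Set.Ioc (c*x) ((1-c)*x), f t * g (x - t)) ≤ A * B * ((c*x) ^ (-s))^2 * x := by
  have hcx : 0 < c * x := lt_of_lt_of_le hM hMx
  set D := A * B * ((c*x) ^ (-s))^2 with hD
  have hD0 : 0 ≤ D := by positivity
  have key : ∀ t ∈ Set.Ioc (c*x) ((1-c)*x), f t * g (x - t) ≤ D := by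
    intro t ht
    have ht1 : c * x < t := ht.1
    have ht2 : t ≤ (1-c) * x := ht.2
    have hMt : M ≤ t := le_trans hMx ht1.le
    have hMxt : M ≤ x - t := by
      have : c * x ≤ x - t := by nlinarith
      linarith [hMx]
    have hf1 : f t ≤ A * t ^ (-s) := hfb t hMt
    have hg1 : g (x - t) ≤ B * (x - t) ^ (-s) := hgb (x - t) hMxt
    have hr1 : t ^ (-s) ≤ (c*x) ^ (-s) := rpow_neg_anti hs hcx ht1.le
    have hr2 : (x - t) ^ (-s) ≤ (c*x) ^ (-s) := by
      refine rpow_neg_anti hs hcx ?_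
      nlinarith
    have hp : 0 < (c*x) ^ (-s) := Real.rpow_pos_of_pos hcx _
    have hft : 0 ≤ f t := hf0 t
    have hgt : 0 ≤ g (x - t) := hg0 (x - t)
    have h1 : f t ≤ A * (c*x) ^ (-s) := by nlinarith
    have h2 : g (x - t) ≤ B * (c*x) ^ (-s) := by nlinarith
    calc f t * g (x - t) ≤ (A * (c*x) ^ (-s)) * (B * (c*x) ^ (-s)) := by nlinarith
    _ = D := by rw [hD]; ring
  have hIntD : IntegrableOn (fun _ : ℝ => D) (Set.Ioc (c*x) ((1-c)*x)) :=
    integrableOn_const measure_Ioc_lt_top.ne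
  have hmeas : AEStronglyMeasurable (fun t => f t * g (x - t))
      (volume.restrict (Set.Ioc (c*x) ((1-c)*x))) :=
    ((hfm.mul (hgm.comp (measurable_const.sub measurable_id))).aestronglyMeasurable)
  have hInt : IntegrableOn (fun t => f t * g (x - t)) (Set.Ioc (c*x) ((1-c)*x)) := by
    refine Integrable.mono' hIntD hmeas ?_
    rw [ae_restrict_iff' measurableSet_Ioc]
    filter_upwards with t
    intro ht
    rw [Real.norm_eq_abs, abs_of_nonneg (mul_nonneg (hf0 t) (hg0 _))]
    exact key t ht
  refine ⟨hInt, ?_⟩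
  have := setIntegral_mono_on hInt hIntD measurableSet_Ioc key
  rw [setIntegral_const, Real.volume_real_Ioc, smul_eq_mul] at this
  have hvol : max ((1-c)*x - c*x) 0 = (1-c)*x - c*x :=
    max_eq_left (by nlinarith)
  rw [hvol] at this
  calc (∫ t in Set.Ioc (c*x) ((1-c)*x), f t * g (x - t)) ≤ ((1-c)*x - c*x) * D := this
  _ ≤ x * D := by nlinarith
  _ = D * x := mul_comm _ _

set_option maxHeartbeats 1000000 in
lemma conv_tendsto (f g : ℝ → ℝ) (s a b : ℝ) (hs : 1 < s) (ha : 0 < a) (hb : 0 < b)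
    (hfm : Measurable f) (hgm : Measurable g)
    (hf0 : ∀ x, 0 ≤ f x) (hg0 : ∀ x, 0 ≤ g x)
    (hfz : ∀ x ≤ 0, f x = 0) (hgz : ∀ x ≤ 0, g x = 0)
    (hfi : (∫ x, f x) = 1) (hgi : (∫ x, g x) = 1)
    (hfa : Tendsto (fun x => f x / x ^ (-s)) atTop (nhds a))
    (hgb : Tendsto (fun x => g x / x ^ (-s)) atTop (nhds b)) :
    Tendsto (fun x => (∫ t in Set.Ioc (0:ℝ) x, f t * g (x - t)) / x ^ (-s)) atTop
      (nhds (a + b)) := by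
  have hfint : Integrable f := by
    by_contra h; rw [integral_undef h] at hfi; norm_num at hfi
  have hgint : Integrable g := by
    by_contra h; rw [integral_undef h] at hgi; norm_num at hgi
  rw [Metric.tendsto_nhds]
  intro E hE
  -- choice of ε
  set ε := min 1 (min a (min b (E / (2 * (a + b + 5))))) with hεdef
  have habE : 0 < E / (2 * (a + b + 5)) := by positivity
  have hε : 0 < ε := by
    simp only [hεdef, lt_min_iff]
    exact ⟨one_pos, ha, hb, habE⟩
  have hε1 : ε ≤ 1 := min_le_left _ _
  have hεa : ε ≤ a := le_trans (min_le_right _ _) (min_le_left _ _)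
  have hεb : ε ≤ b := le_trans (min_le_right _ _) (le_trans (min_le_right _ _) (min_le_left _ _))
  have hεE' : ε ≤ E / (2 * (a + b + 5)) :=
    le_trans (min_le_right _ _) (le_trans (min_le_right _ _) (min_le_right _ _))
  have hεE : ε * (a + b + 5) < E := by
    have h5 : 0 < a + b + 5 := by linarith
    have := (le_div_iff₀ (by positivity : (0:ℝ) < 2 * (a + b + 5))).mp hεE'
    nlinarith
  -- choice of c
  set c := 1 - (1 + ε) ^ (-(1/s)) with hcdef
  have h1ε : (1:ℝ) < 1 + ε := by linarith
  have hpow_lt : (1 + ε) ^ (-(1/s)) < 1 :=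
    Real.rpow_lt_one_of_one_lt_of_neg h1ε (neg_lt_zero.mpr (by positivity))
  have hc0 : 0 < c := by rw [hcdef]; linarith
  have hpow_ge : (1/2 : ℝ) ≤ (1 + ε) ^ (-(1/s)) := by
    have h1 : (1 + ε) ^ (-1 : ℝ) ≤ (1 + ε) ^ (-(1/s)) := by
      apply Real.rpow_le_rpow_of_exponent_le h1ε.le
      have hs0 : 0 < s := by linarith
      rw [neg_le_neg_iff, div_le_one hs0]
      linarith
    have h2 : (1/2 : ℝ) ≤ (1 + ε) ^ (-1 : ℝ) := by
      rw [Real.rpow_neg_one]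
      have hp : (0:ℝ) < 1 + ε := by linarith
      rw [le_inv_comm₀ (by norm_num) hp]
      linarith
    linarith
  have hc2 : c ≤ 1/2 := by rw [hcdef]; linarith
  have hs0 : (0:ℝ) < s := by linarith
  have hcs : ((1 : ℝ) - c) ^ (-s) = 1 + ε := by
    rw [hcdef, sub_sub_cancel, ← Real.rpow_mul (by linarith : (0:ℝ) ≤ 1 + ε)]
    have : -(1/s) * -s = 1 := by field_simp
    rw [this, Real.rpow_one]
  clear_value c
  clear_value ε
  obtain ⟨Mf, hMf0, hMf⟩ := asymp_bounds f hε hfa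
  obtain ⟨Mg, hMg0, hMg⟩ := asymp_bounds g hε hgb
  set M := max Mf Mg with hMdef
  have hM0 : 0 < M := lt_of_lt_of_le hMf0 (le_max_left _ _)
  have hMf' : ∀ u, M ≤ u → (a - ε) * u ^ (-s) ≤ f u ∧ f u ≤ (a + ε) * u ^ (-s) :=
    fun u hu => hMf u (le_trans (le_max_left _ _) hu)
  have hMg' : ∀ u, M ≤ u → (b - ε) * u ^ (-s) ≤ g u ∧ g u ≤ (b + ε) * u ^ (-s) :=
    fun u hu => hMg u (le_trans (le_max_right _ _) hu)
  clear_value M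
  have hcx_top : Tendsto (fun x : ℝ => c * x) atTop atTop :=
    Tendsto.const_mul_atTop hc0 tendsto_id
  have htailf := (tail_one f hfz hfint hfi).comp hcx_top
  have htailg := (tail_one g hgz hgint hgi).comp hcx_top
  set K := (a + ε) * (b + ε) * (c ^ (-s))^2 with hKdef
  have hKtend : Tendsto (fun x : ℝ => K * x ^ (-(s - 1))) atTop (nhds 0) := by
    have := (tendsto_rpow_neg_atTop (by linarith : (0:ℝ) < s - 1)).const_mul K
    simpa using this
  have ev1 : ∀ᶠ x : ℝ in atTop, (1:ℝ) ≤ x := eventually_ge_atTop 1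
  have ev2 : ∀ᶠ x : ℝ in atTop, M ≤ c * x := hcx_top.eventually_ge_atTop M
  have ev3 := htailf.eventually (eventually_gt_nhds (show 1 - ε < 1 by linarith))
  have ev4 := htailg.eventually (eventually_gt_nhds (show 1 - ε < 1 by linarith))
  have ev5 : ∀ᶠ x : ℝ in atTop, K * x ^ (-(s-1)) < ε :=
    hKtend.eventually (gt_mem_nhds hε)
  filter_upwards [ev1, ev2, ev3, ev4, ev5] with x hx1 hMcx hPf hPg hKx
  simp only [Function.comp_apply] at hPf hPg
  have hx0 : (0:ℝ) < x := by linarith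
  have hMcx' : M ≤ (1 - c) * x :=
    le_trans hMcx (by nlinarith [mul_nonneg (by linarith : (0:ℝ) ≤ 1 - 2*c) hx0.le])
  have hc1 : c < 1 := by linarith
  obtain ⟨hI1int, hI1lo, hI1hi⟩ := edge_piece f g hfm hgm hf0 hg0 hfint hs0 hε.le
    (by linarith) hc0 hc1 hMcx' hM0 hx0 hMg'
  obtain ⟨hI3int, hI3lo, hI3hi⟩ := edge_piece g f hgm hfm hg0 hf0 hgint hs0 hε.le
    (by linarith) hc0 hc1 hMcx' hM0 hx0 hMf'
  obtain ⟨hI2int, hI2hi⟩ := mid_piece f g hfm hgm hf0 hg0 hs0 hM0 hc0 hc2 hMcx hx0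
    (by linarith) (by linarith) (fun u hu => (hMf' u hu).2) (fun u hu => (hMg' u hu).2)
  set h3 : ℝ → ℝ := fun u => g u * f (x - u) with hh3
  have hfun : (fun t => f t * g (x - t)) = (fun t => h3 (x - t)) := by
    funext t; simp only [hh3, sub_sub_cancel]; ring
  have hord1 : (0:ℝ) ≤ c * x := by positivity
  have hord2 : c * x ≤ (1-c) * x := by
    nlinarith [mul_nonneg (by linarith : (0:ℝ) ≤ 1 - 2*c) hx0.le]
  have hord3 : (1-c) * x ≤ x := by nlinarith [mul_nonneg hc0.le hx0.le]
  have hii1 : IntervalIntegrable (fun t => f t * g (x - t)) volume 0 (c*x) :=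
    (intervalIntegrable_iff_integrableOn_Ioc_of_le hord1).mpr hI1int
  have hii2 : IntervalIntegrable (fun t => f t * g (x - t)) volume (c*x) ((1-c)*x) :=
    (intervalIntegrable_iff_integrableOn_Ioc_of_le hord2).mpr hI2int
  have hii3' : IntervalIntegrable h3 volume 0 (c*x) :=
    (intervalIntegrable_iff_integrableOn_Ioc_of_le hord1).mpr hI3int
  have hii3 : IntervalIntegrable (fun t => f t * g (x - t)) volume ((1-c)*x) x := by
    have h := hii3'.comp_sub_left x
    have e1 : x - c*x = (1-c)*x := by ring
    rw [e1, sub_zero] at h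
    rw [hfun]
    exact h.symm
  have hI3eq : (∫ t in ((1-c)*x)..x, f t * g (x - t)) = ∫ u in Set.Ioc 0 (c*x), h3 u := by
    rw [hfun, intervalIntegral.integral_comp_sub_left h3 x]
    have e1 : x - x = 0 := sub_self x
    have e2 : x - (1-c)*x = c*x := by ring
    rw [e1, e2, intervalIntegral.integral_of_le hord1]
  have hsplit : (∫ t in Set.Ioc 0 x, f t * g (x - t)) =
      (∫ t in Set.Ioc 0 (c*x), f t * g (x - t))
      + (∫ t in Set.Ioc (c*x) ((1-c)*x), f t * g (x - t))
      + (∫ u in Set.Ioc 0 (c*x), h3 u) := by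
    rw [← intervalIntegral.integral_of_le hx0.le,
      ← intervalIntegral.integral_add_adjacent_intervals (hii1.trans hii2) hii3,
      ← intervalIntegral.integral_add_adjacent_intervals hii1 hii2,
      intervalIntegral.integral_of_le hord1, intervalIntegral.integral_of_le hord2, hI3eq]
  set P := ∫ t in Set.Ioc 0 (c*x), f t with hPdef
  set Q := ∫ t in Set.Ioc 0 (c*x), g t with hQdef
  have hPle : P ≤ 1 := le_trans (setIntegral_le_integral hfint (ae_of_all _ hf0)) hfi.le
  have hQle : Q ≤ 1 := le_trans (setIntegral_le_integral hgint (ae_of_all _ hg0)) hgi.le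
  set xs := x ^ (-s) with hxsdef
  have hxs : 0 < xs := Real.rpow_pos_of_pos hx0 _
  have hsc : ((1-c)*x) ^ (-s) = (1+ε) * xs := by
    rw [Real.mul_rpow (by linarith) hx0.le, hcs]
  have hI2lo : 0 ≤ ∫ t in Set.Ioc (c*x) ((1-c)*x), f t * g (x - t) :=
    setIntegral_nonneg measurableSet_Ioc (fun t _ => mul_nonneg (hf0 t) (hg0 _))
  have hxx : xs * x = x ^ (-(s-1)) := by
    have e : -(s-1) = -s + 1 := by ring
    rw [e, Real.rpow_add hx0, Real.rpow_one, hxsdef]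
  have hI2hi' : (∫ t in Set.Ioc (c*x) ((1-c)*x), f t * g (x - t)) ≤ ε * xs := by
    have e : (a+ε) * (b+ε) * ((c*x) ^ (-s))^2 * x = (K * x ^ (-(s-1))) * xs := by
      rw [Real.mul_rpow hc0.le hx0.le, hKdef]
      calc (a+ε) * (b+ε) * (c ^ (-s) * xs)^2 * x
          = (a+ε) * (b+ε) * (c ^ (-s))^2 * (xs * x) * xs := by ring
        _ = (a+ε) * (b+ε) * (c ^ (-s))^2 * x ^ (-(s-1)) * xs := by rw [hxx]
    rw [e] at hI2hi
    have : (K * x ^ (-(s-1))) * xs ≤ ε * xs :=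
      mul_le_mul_of_nonneg_right hKx.le hxs.le
    linarith
  have hI1hi' : (∫ t in Set.Ioc 0 (c*x), f t * g (x - t)) ≤ (b+ε) * ((1+ε) * xs) * P := by
    rw [← hsc]; exact hI1hi
  have hI3hi' : (∫ u in Set.Ioc 0 (c*x), h3 u) ≤ (a+ε) * ((1+ε) * xs) * Q := by
    rw [← hsc]; exact hI3hi
  have hbe : (0:ℝ) ≤ (b+ε) * ((1+ε) * xs) :=
    mul_nonneg (by linarith) (mul_nonneg (by linarith) hxs.le)
  have hae : (0:ℝ) ≤ (a+ε) * ((1+ε) * xs) :=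
    mul_nonneg (by linarith) (mul_nonneg (by linarith) hxs.le)
  have hbm : (0:ℝ) ≤ (b-ε) * xs := mul_nonneg (by linarith) hxs.le
  have ham : (0:ℝ) ≤ (a-ε) * xs := mul_nonneg (by linarith) hxs.le
  have hup : (∫ t in Set.Ioc 0 x, f t * g (x - t)) ≤ ((a+b+2*ε) * (1+ε) + ε) * xs := by
    rw [hsplit]
    have h1 : (∫ t in Set.Ioc 0 (c*x), f t * g (x - t)) ≤ (b+ε) * ((1+ε) * xs) := by
      have := mul_le_mul_of_nonneg_left hPle hbe
      rw [mul_one] at this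
      linarith only [hI1hi', this]
    have h3b : (∫ u in Set.Ioc 0 (c*x), h3 u) ≤ (a+ε) * ((1+ε) * xs) := by
      have := mul_le_mul_of_nonneg_left hQle hae
      rw [mul_one] at this
      linarith only [hI3hi', this]
    linarith only [h1, h3b, hI2hi']
  have hlo : ((a+b-2*ε) * (1-ε)) * xs ≤ ∫ t in Set.Ioc 0 x, f t * g (x - t) := by
    rw [hsplit]
    have h1 : (b-ε) * xs * (1-ε) ≤ (∫ t in Set.Ioc 0 (c*x), f t * g (x - t)) := by
      have := mul_le_mul_of_nonneg_left hPf.le hbm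
      linarith only [hI1lo, this]
    have h3b : (a-ε) * xs * (1-ε) ≤ (∫ u in Set.Ioc 0 (c*x), h3 u) := by
      have := mul_le_mul_of_nonneg_left hPg.le ham
      linarith only [hI3lo, this]
    linarith only [h1, h3b, hI2lo]
  rw [Real.dist_eq, abs_sub_lt_iff]
  constructor
  · have h1 : (∫ t in Set.Ioc 0 x, f t * g (x - t)) / xs ≤ (a+b+2*ε) * (1+ε) + ε := by
      rw [div_le_iff₀ hxs]; linarith only [hup]
    nlinarith only [h1, hεE, hε1, hε, ha, hb]
  · have h1 : (a+b-2*ε) * (1-ε) ≤ (∫ t in Set.Ioc 0 x, f t * g (x - t)) / xs := by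
      rw [le_div_iff₀ hxs]; linarith only [hlo]
    nlinarith only [h1, hεE, hε1, hε, ha, hb]

/-- Let f₀₁, f₀₂, f₁, f₂ be probability densities supported on (0,∞), with
f₀ₖ(x) ~ x^{−s} and fₖ(x) ~ ρₖ x^{−s} as x → ∞ (s > 1, ρₖ > 0).  Then the
convolution ratio
r(x) = (∫₀^x f₁(t)f₂(x−t) dt)/(∫₀^x f₀₁(t)f₀₂(x−t) dt) → (ρ₁+ρ₂)/2 as x → ∞. -/
theorem stmt17 (f₀₁ f₀₂ f₁ f₂ : ℝ → ℝ) (s ρ₁ ρ₂ : ℝ) (hs : 1 < s)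
    (hρ₁ : 0 < ρ₁) (hρ₂ : 0 < ρ₂)
    (hm : Measurable f₀₁ ∧ Measurable f₀₂ ∧ Measurable f₁ ∧ Measurable f₂)
    (hnn : (∀ x, 0 ≤ f₀₁ x) ∧ (∀ x, 0 ≤ f₀₂ x) ∧ (∀ x, 0 ≤ f₁ x) ∧ (∀ x, 0 ≤ f₂ x))
    (hz : ∀ x ≤ 0, f₀₁ x = 0 ∧ f₀₂ x = 0 ∧ f₁ x = 0 ∧ f₂ x = 0)
    (hint : (∫ x, f₀₁ x = 1) ∧ (∫ x, f₀₂ x = 1) ∧ (∫ x, f₁ x = 1) ∧ (∫ x, f₂ x = 1))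
    (h01 : Tendsto (fun x => f₀₁ x / x ^ (-s)) atTop (nhds 1))
    (h02 : Tendsto (fun x => f₀₂ x / x ^ (-s)) atTop (nhds 1))
    (h1 : Tendsto (fun x => f₁ x / x ^ (-s)) atTop (nhds ρ₁))
    (h2 : Tendsto (fun x => f₂ x / x ^ (-s)) atTop (nhds ρ₂)) :
    Tendsto (fun x => (∫ t in Set.Ioc (0:ℝ) x, f₁ t * f₂ (x - t))
        / (∫ t in Set.Ioc (0:ℝ) x, f₀₁ t * f₀₂ (x - t))) atTop (nhds ((ρ₁ + ρ₂) / 2)) := by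
  obtain ⟨hm1, hm2, hm3, hm4⟩ := hm
  obtain ⟨hn1, hn2, hn3, hn4⟩ := hnn
  obtain ⟨hi1, hi2, hi3, hi4⟩ := hint
  have hnum := conv_tendsto f₁ f₂ s ρ₁ ρ₂ hs hρ₁ hρ₂ hm3 hm4 hn3 hn4
    (fun x hx => (hz x hx).2.2.1) (fun x hx => (hz x hx).2.2.2) hi3 hi4 h1 h2
  have hden := conv_tendsto f₀₁ f₀₂ s 1 1 hs one_pos one_pos hm1 hm2 hn1 hn2
    (fun x hx => (hz x hx).1) (fun x hx => (hz x hx).2.1) hi1 hi2 h01 h02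
  have h2ne : (1:ℝ) + 1 ≠ 0 := by norm_num
  have hdiv := hnum.div hden h2ne
  have heq : ∀ᶠ x : ℝ in atTop,
      ((∫ t in Set.Ioc (0:ℝ) x, f₁ t * f₂ (x - t)) / x ^ (-s))
        / ((∫ t in Set.Ioc (0:ℝ) x, f₀₁ t * f₀₂ (x - t)) / x ^ (-s))
      = (∫ t in Set.Ioc (0:ℝ) x, f₁ t * f₂ (x - t))
        / (∫ t in Set.Ioc (0:ℝ) x, f₀₁ t * f₀₂ (x - t)) := by
    filter_upwards [eventually_gt_atTop (0:ℝ)] with x hx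
    have hxs : x ^ (-s) ≠ 0 := ne_of_gt (Real.rpow_pos_of_pos hx _)
    rw [div_div_div_comm, div_self hxs, div_one]
  have := hdiv.congr' heq
  convert this using 2
  norm_num
end
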